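/- arXiv:1212.2118 — 6 statements merged into one kernel-verified Lean document; each statement's English description precedes it below -/
import Mathlib

section
/- Let w_1,…,w_m be nonempty words in the free monoid on X_1,…,X_d and let ρ_1,…,ρ_m ∈ I_A be the corresponding monomials of A, which are homogeneous of degrees σ_j = τ-weight of w_j. Then the sequence ρ_1,…,ρ_m is strongly free if and only if the sequence of words w_1,…,w_m is combinatorially free. -/
/-!
Setup: `A = F_p⟨X_1,…,X_d⟩`, the free associative algebra over `F_p` on `d`
noncommuting variables, realized as the monoid algebra of the free monoid on `Fin d`.
-/

namespace MildStmt

/-- The free associative algebra `A = F_p⟨X_1,…,X_d⟩`. -/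
abbrev A (p d : ℕ) : Type := MonoidAlgebra (ZMod p) (FreeMonoid (Fin d))

/-- The generator `X_i` of `A`. -/
noncomputable def X (p d : ℕ) (i : Fin d) : A p d :=
  MonoidAlgebra.of (ZMod p) (FreeMonoid (Fin d)) (FreeMonoid.of i)

/-- The `τ`-weight of a word in the letters `X_1,…,X_d`. -/
def wt {d : ℕ} (τ : Fin d → ℕ) (w : FreeMonoid (Fin d)) : ℕ :=
  (w.toList.map τ).sum

/-- The degree-`n` homogeneous component `A_n` of `A`:
the `F_p`-span of the monomials of `τ`-weight `n`. -/
noncomputable def Asub (p d : ℕ) (τ : Fin d → ℕ) (n : ℕ) : Submodule (ZMod p) (A p d) :=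
  Submodule.span (ZMod p)
    {x | ∃ w : FreeMonoid (Fin d), wt τ w = n ∧
      x = MonoidAlgebra.of (ZMod p) (FreeMonoid (Fin d)) w}

/-- The two-sided ideal generated by a set `S ⊆ A`, as an `F_p`-submodule of `A`. -/
noncomputable def tsi (p d : ℕ) (S : Set (A p d)) : Submodule (ZMod p) (A p d) :=
  Submodule.span (ZMod p) {x | ∃ a s b, s ∈ S ∧ x = a * s * b}

/-- The augmentation ideal `I_A`: the two-sided ideal generated by `X_1,…,X_d`. -/
noncomputable def IA (p d : ℕ) : Submodule (ZMod p) (A p d) :=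
  tsi p d (Set.range (X p d))

/-- `dim_{F_p} B_n` where `B = A/R`, graded by the images `B_n` of the `A_n`,
with the convention that the dimension is `0` for negative `n`. -/
noncomputable def dimB (p d : ℕ) (R : Submodule (ZMod p) (A p d)) (τ : Fin d → ℕ)
    (n : ℤ) : ℕ :=
  if 0 ≤ n then Module.finrank (ZMod p) (Submodule.map R.mkQ (Asub p d τ n.toNat)) else 0


/-- The strong freeness condition for a sequence of homogeneous elements
`ρ_j` of degrees `σ_j`: the graded quotient `B = A/(ρ_1,…,ρ_m)` satisfies
`dim B_0 = 1` and `dim B_n − Σ_i dim B_{n−τ_i} + Σ_j dim B_{n−σ_j} = 0` for `n ≥ 1`. -/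
def StronglyFree (p d : ℕ) (τ : Fin d → ℕ) {m : ℕ} (σ : Fin m → ℕ)
    (ρ : Fin m → A p d) : Prop :=
  dimB p d (tsi p d (Set.range ρ)) τ 0 = 1 ∧
  ∀ n : ℤ, 1 ≤ n →
    (dimB p d (tsi p d (Set.range ρ)) τ n : ℤ)
      - ∑ i : Fin d, (dimB p d (tsi p d (Set.range ρ)) τ (n - (τ i : ℤ)) : ℤ)
      + ∑ j : Fin m, (dimB p d (tsi p d (Set.range ρ)) τ (n - (σ j : ℤ)) : ℤ) = 0

/-- Combinatorial freeness of a sequence of words. -/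
def CombFree {d m : ℕ} (w : Fin m → FreeMonoid (Fin d)) : Prop :=
  (∀ i j, i ≠ j → ∀ u v : FreeMonoid (Fin d), w j ≠ u * w i * v) ∧
  (∀ i j, ∀ x y x' y' : FreeMonoid (Fin d), x ≠ 1 → y ≠ 1 → x' ≠ 1 → y' ≠ 1 →
    w i = x * y → w j = x' * y' → x ≠ y')


section DimAux

open Finsupp Submodule

lemma fd_supported (K : Type*) [Field K] {α : Type*} {S : Set α} (hS : S.Finite) :
    FiniteDimensional K (Finsupp.supported K K S) := by
  have : Finite S := hS
  have e := (Finsupp.supportedEquivFinsupp (M := K) (R := K) S).trans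
    (Finsupp.linearEquivFunOnFinite K K S)
  exact Module.Finite.equiv e.symm

lemma finrank_supported (K : Type*) [Field K] {α : Type*} {S : Set α} (hS : S.Finite) :
    Module.finrank K (Finsupp.supported K K S) = Nat.card S := by
  have : Finite S := hS
  have e := (Finsupp.supportedEquivFinsupp (M := K) (R := K) S).trans
    (Finsupp.linearEquivFunOnFinite K K S)
  rw [LinearEquiv.finrank_eq e]
  have : Fintype S := Fintype.ofFinite _
  simp [Module.finrank_fintype_fun_eq_card, Nat.card_eq_fintype_card]

lemma supported_inf (K : Type*) [Field K] {α : Type*} (S T : Set α) :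
    Finsupp.supported K K S ⊓ Finsupp.supported K K T = Finsupp.supported K K (S ∩ T) := by
  ext x
  simp only [Submodule.mem_inf, Finsupp.mem_supported, Set.subset_inter_iff]

lemma finrank_map_mkQ_supported (K : Type*) [Field K] {α : Type*} (S T : Set α)
    (hS : S.Finite) :
    Module.finrank K (Submodule.map (Finsupp.supported K K T).mkQ (Finsupp.supported K K S))
      = (S \ T).ncard := by
  classical
  set N := Finsupp.supported K K T with hN
  set P := Finsupp.supported K K S with hP
  have : FiniteDimensional K P := fd_supported K hS
  set f : P →ₗ[K] ((α →₀ K) ⧸ N) := N.mkQ ∘ₗ P.subtype with hf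
  have hrange : LinearMap.range f = Submodule.map N.mkQ P := by
    rw [hf, LinearMap.range_comp, Submodule.range_subtype]
  have hker : LinearMap.ker f = Submodule.comap P.subtype N := by
    rw [hf, LinearMap.ker_comp, Submodule.ker_mkQ]
  have hker2 : Submodule.comap P.subtype N = Submodule.comap P.subtype (N ⊓ P) := by
    ext x; simp [Submodule.mem_comap, Submodule.mem_inf, x.2]
  have hNP : N ⊓ P = Finsupp.supported K K (T ∩ S) := supported_inf K T S
  have hkerrank : Module.finrank K (LinearMap.ker f) = Nat.card (T ∩ S : Set α) := by
    rw [hker, hker2,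
      LinearEquiv.finrank_eq (Submodule.comapSubtypeEquivOfLe inf_le_right), hNP,
      finrank_supported K (hS.inter_of_right T)]
  have hrk := LinearMap.finrank_range_add_finrank_ker (V := P) f
  rw [hrange, hkerrank, finrank_supported K hS] at hrk
  have hsub : (T ∩ S : Set α) ⊆ S := Set.inter_subset_right
  have hdiff : (S \ T).ncard = S.ncard - (T ∩ S).ncard := by
    rw [show S \ T = S \ (T ∩ S) by rw [Set.diff_inter_self_eq_diff]]
    exact Set.ncard_diff hsub (hS.inter_of_right T)
  have hle : (T ∩ S).ncard ≤ S.ncard := Set.ncard_le_ncard hsub hS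
  simp only [Nat.card_coe_set_eq] at hrk
  omega

end DimAux

namespace MildComb

variable {d m : ℕ} (τ : Fin d → ℕ) (W : Fin m → List (Fin d))

/-- `l` avoids all the words `W j` as factors. -/
def Av (l : List (Fin d)) : Prop := ∀ j, ¬ W j <:+: l

/-- good words of (integer) weight `k`. -/
def GS (k : ℤ) : Set (List (Fin d)) :=
  {l | ((l.map τ).sum : ℤ) = k ∧ Av W l}

lemma length_le_sum (hτ : ∀ i, 1 ≤ τ i) (l : List (Fin d)) :
    l.length ≤ (l.map τ).sum := by
  calc l.length = (l.map fun _ => 1).sum := by simp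
  _ ≤ (l.map τ).sum := List.sum_le_sum fun i _ => hτ i

lemma GS_finite (hτ : ∀ i, 1 ≤ τ i) (k : ℤ) : (GS τ W k).Finite := by
  apply Set.Finite.subset (List.finite_length_le (Fin d) k.toNat)
  rintro l ⟨h1, -⟩
  have := length_le_sum τ hτ l
  simp only [Set.mem_setOf_eq]
  omega

lemma GS_finite' (hτ : ∀ i, 1 ≤ τ i) (k : ℤ) : Finite (GS τ W k) := GS_finite τ W hτ k

/-- number of good words of weight `k`. -/
noncomputable def c (k : ℤ) : ℕ := Nat.card (GS τ W k)

lemma c_neg {k : ℤ} (hk : k < 0) : c τ W k = 0 := by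
  have : IsEmpty (GS τ W k) := by
    constructor; rintro ⟨l, h1, -⟩
    omega
  simp [c, Nat.card_of_isEmpty]

lemma av_nil (hW : ∀ j, W j ≠ []) : Av W ([] : List (Fin d)) := by
  intro j h
  exact hW j (List.eq_nil_of_infix_nil h)

lemma av_infix {l l' : List (Fin d)} (h : l' <:+: l) (hl : Av W l) : Av W l' :=
  fun j hj => hl j (hj.trans h)

lemma c_zero (hτ : ∀ i, 1 ≤ τ i) (hW : ∀ j, W j ≠ []) : c τ W 0 = 1 := by
  have : GS τ W 0 = {([] : List (Fin d))} := by
    ext l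
    simp only [GS, Set.mem_setOf_eq, Set.mem_singleton_iff]
    constructor
    · rintro ⟨h1, -⟩
      have := length_le_sum τ hτ l
      have : l.length = 0 := by omega
      exact List.eq_nil_of_length_eq_zero this
    · rintro rfl
      exact ⟨by simp, av_nil W hW⟩
  rw [c, this, Nat.card_coe_set_eq, Set.ncard_singleton]

end MildComb

namespace MildComb2
open MildComb

variable {d m : ℕ} {τ : Fin d → ℕ} {W : Fin m → List (Fin d)}

/-- list version of combinatorial freeness, part 1 -/
def CF1 (W : Fin m → List (Fin d)) : Prop := ∀ i j, i ≠ j → ¬ W i <:+: W j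

/-- list version of combinatorial freeness, part 2 -/
def CF2 (W : Fin m → List (Fin d)) : Prop :=
  ∀ i j (x y x' y' : List (Fin d)), x ≠ [] → y ≠ [] → x' ≠ [] → y' ≠ [] →
    W i = x ++ y → W j = x' ++ y' → x ≠ y'

/-- L1: an infix of `u ++ [i]` not inside `u` is a suffix. -/
lemma suffix_of_infix_concat {u : List (Fin d)} {i : Fin d} (hu : Av W u)
    {k : Fin m} (h : W k <:+: u ++ [i]) : W k <:+ u ++ [i] := by
  obtain ⟨a, b, hab⟩ := h
  rcases List.eq_nil_or_concat b with rfl | ⟨b', c, rfl⟩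
  · exact ⟨a, by simpa using hab⟩
  · exfalso
    have h2 : (a ++ W k ++ b') ++ [c] = u ++ [i] := by
      simpa [List.concat_eq_append, List.append_assoc] using hab
    have h3 := (List.append_inj' h2 rfl).1
    exact hu k ⟨a, b', by simpa using h3⟩

/-- L2: uniqueness of the `W`-suffix, given CF1. -/
lemma suffix_unique (h1 : CF1 W) {t : List (Fin d)} {j k : Fin m}
    (hj : W j <:+ t) (hk : W k <:+ t) : j = k := by
  by_contra hne
  rcases List.suffix_or_suffix_of_suffix hj hk with h | h
  · exact h1 j k hne h.isInfix
  · exact h1 k j (Ne.symm hne) h.isInfix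

/-- prefixes of equal length are equal -/
lemma prefix_eq_of_length {v a t : List (Fin d)} (hv : v <+: t) (ha : a <+: t)
    (h : v.length = a.length) : v = a := by
  rw [List.prefix_iff_eq_take] at hv ha
  rw [hv, ha, h]

lemma prefix_of_prefix_length_le {x y t : List (Fin d)} (hx : x <+: t) (hy : y <+: t)
    (h : x.length ≤ y.length) : x <+: y := by
  rcases List.prefix_or_prefix_of_prefix hx hy with h' | h'
  · exact h'
  · have hxy : y = x := prefix_eq_of_length hy hx (le_antisymm h'.length_le h)
    rw [hxy]

/-- L3: key lemma: appending `dropLast (W j)` to an avoiding word stays avoiding. -/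
lemma av_append_dropLast (h1 : CF1 W) (h2 : CF2 W) (hW : ∀ j, W j ≠ [])
    {v : List (Fin d)} (hv : Av W v) (j : Fin m) : Av W (v ++ (W j).dropLast) := by
  intro l hl
  obtain ⟨a, b, hab⟩ := hl
  set D := (W j).dropLast with hD
  have hDj : D <+: W j := List.dropLast_prefix _
  have hDlen : D.length = (W j).length - 1 := List.length_dropLast
  have hWjlen : 1 ≤ (W j).length := List.length_pos_iff.2 (hW j)
  have hWllen : 1 ≤ (W l).length := List.length_pos_iff.2 (hW l)
  have htot : a ++ W l ++ b = v ++ D := hab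
  have hpv : (v : List (Fin d)) <+: v ++ D := List.prefix_append _ _
  have hpaWl : a ++ W l <+: v ++ D := ⟨b, by simpa [List.append_assoc] using htot⟩
  have hpa : (a : List (Fin d)) <+: v ++ D :=
    ((List.prefix_append a (W l)).trans hpaWl)
  by_cases hcase1 : a.length + (W l).length ≤ v.length
  · -- W l inside v
    refine hv l ?_
    have h' : a ++ W l <+: v :=
      prefix_of_prefix_length_le hpaWl hpv (by simp; omega)
    exact ((List.suffix_append a (W l)).isInfix).trans h'.isInfix
  · by_cases hcase2 : v.length ≤ a.length
    · -- W l inside D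
      have hva : v <+: a := prefix_of_prefix_length_le hpv hpa hcase2
      obtain ⟨a', rfl⟩ := hva
      rw [List.append_assoc, List.append_assoc] at htot
      have h4 : a' ++ (W l ++ b) = D := List.append_cancel_left htot
      have hinf : W l <:+: W j :=
        List.IsInfix.trans ⟨a', b, by simpa [List.append_assoc] using h4⟩ hDj.isInfix
      by_cases hlj : l = j
      · subst hlj
        have := hinf.length_le
        have h5 := congrArg List.length h4
        simp at h5
        omega
      · exact h1 l j hlj hinf
    · -- straddling case
      push_neg at hcase1 hcase2
      set s := (W l).take (v.length - a.length) with hs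
      set pfx := (W l).drop (v.length - a.length) with hpfx
      have hsl : s ++ pfx = W l := List.take_append_drop _ _
      have hslen : s.length = v.length - a.length := by
        rw [hs, List.length_take]; omega
      have hpfxlen : pfx.length = (W l).length - (v.length - a.length) := by
        rw [hpfx, List.length_drop]
      have has : a ++ s <+: v ++ D := by
        refine List.IsPrefix.trans ?_ hpaWl
        exact (List.prefix_append_right_inj a).2 (List.take_prefix _ _)
      have hveq : v = a ++ s := by
        apply prefix_eq_of_length hpv has
        simp [hslen]; omega
      have hDeq : pfx ++ b = D := by
        apply List.append_cancel_left (as := a ++ s)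
        calc (a ++ s) ++ (pfx ++ b) = a ++ (s ++ pfx) ++ b := by
              simp [List.append_assoc]
        _ = a ++ W l ++ b := by rw [hsl]
        _ = v ++ D := htot
        _ = (a ++ s) ++ D := by rw [hveq]
      have hpfxne : pfx ≠ [] := by
        intro h
        rw [h] at hpfxlen; simp at hpfxlen; omega
      have hsne : s ≠ [] := by
        intro h
        rw [h] at hslen; simp at hslen; omega
      have hpfxWj : pfx <+: W j := (List.prefix_append pfx b).trans (hDeq ▸ hDj)
      obtain ⟨rest, hrest⟩ := hpfxWj
      have hrestne : rest ≠ [] := by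
        intro h
        rw [h] at hrest
        have := congrArg List.length hrest
        have h6 := congrArg List.length hDeq
        simp at this h6
        omega
      exact h2 j l pfx rest s pfx hpfxne hrestne hsne hpfxne hrest.symm hsl.symm rfl

section Maps

variable (τ) (W)

/-- source type: pairs (letter i, good word of weight n - τ i) -/
def SrcT (n : ℤ) : Type := Σ i : Fin d, (GS τ W (n - τ i) : Set (List (Fin d)))

/-- target type -/
def TgtT (n : ℤ) : Type :=
  (GS τ W n : Set (List (Fin d))) ⊕ Σ j : Fin m, (GS τ W (n - ((W j).map τ).sum) : Set (List (Fin d)))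

/-- tie-breaking key -/
def fkey (k : Fin m) : ℕ := (W k).length * (m + 1) + k.val

/-- reconstruction of the full word from a target element -/
def recon {n : ℤ} : TgtT τ W n → List (Fin d)
  | Sum.inl t => (t : List (Fin d))
  | Sum.inr ⟨j, v⟩ => (v : List (Fin d)) ++ W j

/-- the defining property of the forward map Φ : Src → Tgt -/
def IsGood {n : ℤ} (a : SrcT τ W n) (e : TgtT τ W n) : Prop :=
  recon τ W e = a.2.1 ++ [a.1] ∧
    (∀ t' : (GS τ W n : Set (List (Fin d))), e = Sum.inl t' → True) ∧
    (∀ (k : Fin m) (v : (GS τ W (n - ((W k).map τ).sum) : Set (List (Fin d)))),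
      e = Sum.inr ⟨k, v⟩ → ∀ k', W k' <:+ (a.2.1 ++ [a.1]) → fkey W k ≤ fkey W k')

lemma sum_concat (u : List (Fin d)) (i : Fin d) :
    ((u ++ [i]).map τ).sum = (u.map τ).sum + τ i := by simp

lemma exists_isGood (hW : ∀ j, W j ≠ []) {n : ℤ} (a : SrcT τ W n) :
    ∃ e, IsGood τ W a e := by
  classical
  obtain ⟨i, u, hsum, hav⟩ := a
  set t := u ++ [i] with hT
  have htsum : ((t.map τ).sum : ℤ) = n := by
    rw [hT, sum_concat, Nat.cast_add, hsum]
    ring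
  by_cases h : Av W t
  · exact ⟨Sum.inl ⟨t, htsum, h⟩, rfl, fun _ _ => trivial, fun k v hkv => by simp at hkv⟩
  · -- pick minimal suffix
    simp only [Av, not_forall, not_not] at h
    obtain ⟨k1, hk1⟩ := h
    have hk1s : W k1 <:+ t := suffix_of_infix_concat hav hk1
    set F : Finset (Fin m) := Finset.univ.filter (fun k => W k <:+ t) with hF
    have hne : F.Nonempty := ⟨k1, by simp [hF, hk1s]⟩
    obtain ⟨k₀, hk₀F, hk₀min⟩ := Finset.exists_min_image F (fkey W) hne
    have hk₀s : W k₀ <:+ t := by simpa [hF] using hk₀F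
    obtain ⟨v, hv⟩ := hk₀s
    have hWk₀ : W k₀ ≠ [] := hW k₀
    have hvlen : v.length + (W k₀).length = t.length := by
      rw [← hv]; simp
    have hvu : v <+: u := by
      apply prefix_of_prefix_length_le (t := t) ⟨W k₀, hv⟩ ⟨[i], by simp [hT]⟩
      have h1 : 1 ≤ (W k₀).length := List.length_pos_iff.2 hWk₀
      have h2 : t.length = u.length + 1 := by simp [hT]
      omega
    have hvsum : ((v.map τ).sum : ℤ) = n - ((W k₀).map τ).sum := by
      have : (v.map τ).sum + ((W k₀).map τ).sum = (t.map τ).sum := by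
        rw [← hv]; simp
      omega
    refine ⟨Sum.inr ⟨k₀, v, hvsum, av_infix W hvu.isInfix hav⟩, by simpa [recon] using hv,
      fun _ h => trivial, ?_⟩
    rintro k v' hv' k' hk'
    have : k = k₀ := by
      injection hv' with h1
      exact ((Sigma.mk.inj_iff.1 h1).1).symm
    subst this
    exact hk₀min k' (by simp [hF, hT ▸ hk'])

lemma isGood_inj (hW : ∀ j, W j ≠ []) {n : ℤ} {a a' : SrcT τ W n} {e : TgtT τ W n}
    (h : IsGood τ W a e) (h' : IsGood τ W a' e) : a = a' := by
  obtain ⟨i, u, hu⟩ := a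
  obtain ⟨i', u', hu'⟩ := a'
  have heq : u ++ [i] = u' ++ [i'] := by
    rw [← h.1, ← h'.1]
  obtain ⟨h1, h2⟩ := List.append_inj' heq rfl
  have : i = i' := by simpa using h2
  subst this; subst h1
  rfl

/-- property of the backward map Ψ : Tgt → Src -/
def IsGoodPsi {n : ℤ} (e : TgtT τ W n) (a : SrcT τ W n) : Prop :=
  a.2.1 ++ [a.1] = recon τ W e

lemma recon_sum {n : ℤ} (e : TgtT τ W n) :
    (((recon τ W e).map τ).sum : ℤ) = n := by
  rcases e with ⟨t, ht, -⟩ | ⟨j, v, hv, -⟩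
  · exact ht
  · simp only [recon]
    push_cast [List.map_append, List.sum_append]
    push_cast at hv
    omega

lemma recon_ne_nil (hW : ∀ j, W j ≠ []) {n : ℤ} (hn : 1 ≤ n) (e : TgtT τ W n) :
    recon τ W e ≠ [] := by
  intro h
  have := recon_sum τ W e
  rw [h] at this
  simp at this
  omega

lemma exists_isGoodPsi (h1 : CF1 W) (h2 : CF2 W) (hW : ∀ j, W j ≠ [])
    {n : ℤ} (hn : 1 ≤ n) (e : TgtT τ W n) : ∃ a, IsGoodPsi τ W e a := by
  have hne : recon τ W e ≠ [] := recon_ne_nil τ W hW hn e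
  set t := recon τ W e with hT
  set i := t.getLast hne with hi
  set u := t.dropLast with hu
  have hui : u ++ [i] = t := List.dropLast_append_getLast hne
  have husum : ((u.map τ).sum : ℤ) = n - τ i := by
    have := recon_sum τ W e
    rw [← hT] at this
    rw [← hui, sum_concat, Nat.cast_add] at this
    omega
  have huav : Av W u := by
    rcases e with ⟨t', ht', hav⟩ | ⟨j, v, hv', hav⟩
    · exact av_infix W (hu ▸ (List.dropLast_prefix t).isInfix) hav
    · have : u = (v : List (Fin d)) ++ (W j).dropLast := by
        rw [hu, hT]
        exact List.dropLast_append_of_ne_nil (hW j)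
      rw [this]
      exact av_append_dropLast h1 h2 hW hav j
  exact ⟨⟨i, u, husum, huav⟩, hui⟩

lemma isGoodPsi_inj (h1 : CF1 W) {n : ℤ} {e e' : TgtT τ W n} {a : SrcT τ W n}
    (h : IsGoodPsi τ W e a) (h' : IsGoodPsi τ W e' a) : e = e' := by
  have hre : recon τ W e = recon τ W e' := by rw [← h, ← h']
  rcases e with ⟨t, ht⟩ | ⟨j, v, hv⟩ <;> rcases e' with ⟨t', ht'⟩ | ⟨j', v', hv'⟩
  · simp only [recon] at hre
    exact congrArg Sum.inl (Subtype.ext hre)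
  · exfalso
    simp only [recon] at hre
    exact ht.2 j' ((List.suffix_append (v' : List (Fin d)) (W j')).isInfix.trans (hre ▸ List.infix_refl t))
  · exfalso
    simp only [recon] at hre
    exact ht'.2 j ((List.suffix_append (v : List (Fin d)) (W j)).isInfix.trans (hre ▸ List.infix_refl t'))
  · simp only [recon] at hre
    have hjj : j = j' :=
      suffix_unique h1 ⟨(v : List (Fin d)), rfl⟩ ⟨(v' : List (Fin d)), hre.symm⟩
    subst hjj
    have hvv : (v : List (Fin d)) = (v' : List (Fin d)) := List.append_cancel_right hre
    exact congrArg Sum.inr (congrArg (Sigma.mk j) (Subtype.ext hvv))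

end Maps

section Count

variable (τ) (W)

lemma finite_SrcT (hτ : ∀ i, 1 ≤ τ i) (n : ℤ) : Finite (SrcT τ W n) := by
  haveI : ∀ k : ℤ, Finite (GS τ W k) := fun k => GS_finite τ W hτ k
  unfold SrcT
  infer_instance

lemma finite_TgtT (hτ : ∀ i, 1 ≤ τ i) (n : ℤ) : Finite (TgtT τ W n) := by
  haveI : ∀ k : ℤ, Finite (GS τ W k) := fun k => GS_finite τ W hτ k
  unfold TgtT
  infer_instance

lemma card_SrcT (hτ : ∀ i, 1 ≤ τ i) (n : ℤ) :
    Nat.card (SrcT τ W n) = ∑ i : Fin d, c τ W (n - τ i) := by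
  haveI : ∀ k : ℤ, Finite (GS τ W k) := fun k => GS_finite τ W hτ k
  haveI : ∀ k : ℤ, Fintype (GS τ W k) := fun k => Fintype.ofFinite _
  unfold SrcT
  rw [Nat.card_eq_fintype_card, Fintype.card_sigma]
  simp [c, Nat.card_eq_fintype_card]

lemma card_TgtT (hτ : ∀ i, 1 ≤ τ i) (n : ℤ) :
    Nat.card (TgtT τ W n) = c τ W n + ∑ j : Fin m, c τ W (n - ((W j).map τ).sum) := by
  haveI : ∀ k : ℤ, Finite (GS τ W k) := fun k => GS_finite τ W hτ k
  haveI : ∀ k : ℤ, Fintype (GS τ W k) := fun k => Fintype.ofFinite _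
  unfold TgtT
  rw [Nat.card_eq_fintype_card, Fintype.card_sum, Fintype.card_sigma]
  simp [c, Nat.card_eq_fintype_card]

/-- with combinatorial freeness, the counting recursion holds -/
lemma card_eq_of_cf (hτ : ∀ i, 1 ≤ τ i) (h1 : CF1 W) (h2 : CF2 W) (hW : ∀ j, W j ≠ [])
    {n : ℤ} (hn : 1 ≤ n) :
    Nat.card (TgtT τ W n) = Nat.card (SrcT τ W n) := by
  haveI := finite_SrcT τ W hτ n
  haveI := finite_TgtT τ W hτ n
  apply le_antisymm
  · -- injection Tgt → Src via IsGoodPsi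
    choose f hf using exists_isGoodPsi τ W h1 h2 hW hn
    exact Nat.card_le_card_of_injective f (fun e e' hee =>
      isGoodPsi_inj τ W h1 (hf e) (hee ▸ hf e'))
  · -- injection Src → Tgt via IsGood
    choose g hg using exists_isGood τ W hW (n := n)
    exact Nat.card_le_card_of_injective g (fun a a' haa =>
      isGood_inj τ W hW (hg a) (haa ▸ hg a'))

lemma card_lt_of_unhit (hτ : ∀ i, 1 ≤ τ i) (hW : ∀ j, W j ≠ []) {n : ℤ}
    (e₀ : TgtT τ W n) (h : ∀ a, ¬ IsGood τ W a e₀) :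
    Nat.card (SrcT τ W n) < Nat.card (TgtT τ W n) := by
  haveI := finite_SrcT τ W hτ n
  haveI := finite_TgtT τ W hτ n
  haveI : Fintype (SrcT τ W n) := Fintype.ofFinite _
  haveI : Fintype (TgtT τ W n) := Fintype.ofFinite _
  choose g hg using exists_isGood τ W hW (n := n)
  have hinj : Function.Injective g := fun a a' haa =>
    isGood_inj τ W hW (hg a) (haa ▸ hg a')
  have hnm : e₀ ∉ Set.range g := by
    rintro ⟨a, rfl⟩
    exact h a (hg a)
  rw [Nat.card_eq_fintype_card, Nat.card_eq_fintype_card]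
  exact Fintype.card_lt_of_injective_of_notMem g hinj hnm

lemma one_le_sum_of_ne_nil (hτ : ∀ i, 1 ≤ τ i) {l : List (Fin d)} (hl : l ≠ []) :
    1 ≤ ((l.map τ).sum : ℤ) := by
  have h1 := length_le_sum τ hτ l
  have h2 : 1 ≤ l.length := List.length_pos_iff.2 hl
  omega

/-- Case A: some `W i` is a factor of `W j`, `i ≠ j`. -/
lemma not_cf1_witness (hτ : ∀ i, 1 ≤ τ i) (hW : ∀ j, W j ≠ [])
    (h : ¬ CF1 W) :
    ∃ n : ℤ, 1 ≤ n ∧ Nat.card (SrcT τ W n) < Nat.card (TgtT τ W n) := by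
  classical
  simp only [CF1, not_forall, not_not] at h
  obtain ⟨i1, j1, hne1, hinf1⟩ := h
  -- normalize so that if the words are equal then i < j
  obtain ⟨i, j, hij, hinf, hprop⟩ :
      ∃ i j, i ≠ j ∧ (W i <:+: W j) ∧
        ((W i).length < (W j).length ∨ (W i = W j ∧ i.val < j.val)) := by
    rcases lt_or_eq_of_le hinf1.length_le with h | h
    · exact ⟨i1, j1, hne1, hinf1, Or.inl h⟩
    · have heq : W i1 = W j1 := hinf1.eq_of_length h
      rcases lt_or_gt_of_ne (fun hv : i1.val = j1.val => hne1 (Fin.ext hv)) with h' | h'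
      · exact ⟨i1, j1, hne1, hinf1, Or.inr ⟨heq, h'⟩⟩
      · exact ⟨j1, i1, Ne.symm hne1, heq ▸ List.infix_refl _, Or.inr ⟨heq.symm, h'⟩⟩
  set n : ℤ := (((W j).map τ).sum : ℤ) with hn
  have hn1 : 1 ≤ n := one_le_sum_of_ne_nil τ hτ (hW j)
  refine ⟨n, hn1, ?_⟩
  have hnilmem : (([] : List (Fin d)) ∈ GS τ W (n - ((W j).map τ).sum)) :=
    ⟨by simp only [List.map_nil, List.sum_nil, Nat.cast_zero, hn, sub_self], av_nil W hW⟩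
  set e₀ : TgtT τ W n := Sum.inr ⟨j, ⟨[], hnilmem⟩⟩ with he₀
  apply card_lt_of_unhit τ W hτ hW e₀
  rintro ⟨i', u, husum, huav⟩ ⟨hrec, -, hmin⟩
  have hrec' : W j = u ++ [i'] := by simpa [recon, he₀] using hrec
  obtain ⟨a, b, hab⟩ := hinf
  rcases List.eq_nil_or_concat b with rfl | ⟨b', cc, rfl⟩
  · -- W i is a suffix of W j = u ++ [i']
    have hsuf : W i <:+ u ++ [i'] := ⟨a, by rw [← hrec']; simpa using hab⟩
    have hkey := hmin j ⟨[], hnilmem⟩ rfl i hsuf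
    simp only [fkey] at hkey
    rcases hprop with hlen | ⟨heq, hlt⟩
    · have hmul : ((W i).length + 1) * (m + 1) ≤ (W j).length * (m + 1) :=
        Nat.mul_le_mul_right _ (by omega)
      have hival : i.val < m + 1 := by omega
      have hexp : ((W i).length + 1) * (m + 1) = (W i).length * (m + 1) + (m + 1) := by ring
      omega
    · rw [heq] at hkey
      omega
  · -- W i is an infix of u
    have h2 : (a ++ W i ++ b') ++ [cc] = u ++ [i'] := by
      rw [← hrec']
      simpa [List.concat_eq_append, List.append_assoc] using hab
    have h3 := (List.append_inj' h2 rfl).1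
    exact huav i ⟨a, b', by simpa using h3⟩

/-- Case B: CF1 holds but CF2 fails. -/
lemma not_cf2_witness (hτ : ∀ i, 1 ≤ τ i) (hW : ∀ j, W j ≠ [])
    (h1 : CF1 W) (h : ¬ CF2 W) :
    ∃ n : ℤ, 1 ≤ n ∧ Nat.card (SrcT τ W n) < Nat.card (TgtT τ W n) := by
  classical
  simp only [CF2, not_forall, not_not, ne_eq] at h
  obtain ⟨i, j, x, y, x', y', hx, hy, hx', hy', hxy, hx'y', hxeq⟩ := h
  subst hxeq
  -- W i = x ++ y, W j = x' ++ x
  set n : ℤ := (((x' ++ W i).map τ).sum : ℤ) with hn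
  have hn1 : 1 ≤ n := one_le_sum_of_ne_nil τ hτ (by simp [hx'])
  refine ⟨n, hn1, ?_⟩
  have hx'av : Av W x' := by
    intro l hl
    have hinf : W l <:+: W j := hl.trans (hx'y' ▸ (List.prefix_append x' x).isInfix)
    by_cases hlj : l = j
    · subst hlj
      have hle := hl.length_le
      have := congrArg List.length hx'y'
      have hxlen : 1 ≤ x.length := List.length_pos_iff.2 hx
      have hwl : 1 ≤ (W l).length := List.length_pos_iff.2 (hW l)
      simp at this
      omega
    · exact h1 l j hlj hinf
  have hx'mem : x' ∈ GS τ W (n - ((W i).map τ).sum) := by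
    constructor
    · rw [hn]
      push_cast [List.map_append, List.sum_append]
      ring
    · exact hx'av
  set e₀ : TgtT τ W n := Sum.inr ⟨i, ⟨x', hx'mem⟩⟩ with he₀
  apply card_lt_of_unhit τ W hτ hW e₀
  rintro ⟨i', u, husum, huav⟩ ⟨hrec, -, -⟩
  have hrec' : x' ++ W i = u ++ [i'] := by simpa [recon, he₀] using hrec
  have hueq : u = x' ++ (W i).dropLast := by
    have := congrArg List.dropLast hrec'
    rw [List.dropLast_concat, List.dropLast_append_of_ne_nil (hW i)] at this
    exact this.symm
  -- W j = x' ++ x is an infix of u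
  apply huav j
  have hxpre : x <+: (W i).dropLast := by
    rw [hxy, List.dropLast_append_of_ne_nil hy]
    exact List.prefix_append _ _
  have : W j <+: u := by
    rw [hx'y', hueq]
    exact (List.prefix_append_right_inj x').2 hxpre
  exact this.isInfix

lemma not_cf_witness (hτ : ∀ i, 1 ≤ τ i) (hW : ∀ j, W j ≠ [])
    (h : ¬ (CF1 W ∧ CF2 W)) :
    ∃ n : ℤ, 1 ≤ n ∧ Nat.card (SrcT τ W n) < Nat.card (TgtT τ W n) := by
  by_cases h1 : CF1 W
  · exact not_cf2_witness τ W hτ hW h1 (fun h2 => h ⟨h1, h2⟩)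
  · exact not_cf1_witness τ W hτ hW h1

end Count

end MildComb2

namespace MildComb2
open MildComb

lemma recursion_iff_cf {d m : ℕ} (τ : Fin d → ℕ) (W : Fin m → List (Fin d))
    (hτ : ∀ i, 1 ≤ τ i) (hW : ∀ j, W j ≠ [])
    (σ : Fin m → ℕ) (hσ : ∀ j, σ j = ((W j).map τ).sum) :
    (∀ n : ℤ, 1 ≤ n →
      (c τ W n : ℤ) - ∑ i : Fin d, (c τ W (n - (τ i : ℤ)) : ℤ)
        + ∑ j : Fin m, (c τ W (n - (σ j : ℤ)) : ℤ) = 0) ↔ (CF1 W ∧ CF2 W) := by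
  constructor
  · intro h
    by_contra hncf
    obtain ⟨n, hn1, hlt⟩ := not_cf_witness τ W hτ hW hncf
    have heq := h n hn1
    simp only [hσ] at heq
    rw [card_SrcT τ W hτ n, card_TgtT τ W hτ n] at hlt
    have h2 : ((∑ i : Fin d, c τ W (n - (τ i : ℤ)) : ℕ) : ℤ)
        < ((c τ W n + ∑ j : Fin m, c τ W (n - (((W j).map τ).sum : ℤ)) : ℕ) : ℤ) := by
      exact_mod_cast hlt
    push_cast at h2 heq
    linarith
  · rintro ⟨h1, h2⟩ n hn1
    have hcard := congrArg (Nat.cast : ℕ → ℤ) (card_eq_of_cf τ W hτ h1 h2 hW hn1)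
    rw [card_SrcT τ W hτ n, card_TgtT τ W hτ n] at hcard
    push_cast at hcard
    simp only [hσ]
    push_cast
    linarith

end MildComb2

section Bridge

lemma finrank_map_mkQ_msupported (K : Type*) [Field K] {M : Type*} [Monoid M] (S T : Set M)
    (hS : S.Finite) :
    Module.finrank K (Submodule.map (MonoidAlgebra.supported K K T).mkQ
      (MonoidAlgebra.supported K K S)) = (S \ T).ncard := by
  rw [← finrank_map_mkQ_supported K S T hS]
  set e : MonoidAlgebra K M ≃ₗ[K] (M →₀ K) := MonoidAlgebra.coeffLinearEquiv K with he
  have hmap : ∀ U : Set M, (MonoidAlgebra.supported K K U).map e.toLinearMap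
      = Finsupp.supported K K U := fun U => by
    rw [MonoidAlgebra.supported, Submodule.map_comap_eq_of_surjective e.surjective]
  rw [← LinearEquiv.finrank_map_eq (Submodule.Quotient.equiv _ _ e (hmap T)),
    ← Submodule.map_comp, ← hmap S, ← Submodule.map_comp]
  rfl

lemma Asub_eq (p d : ℕ) (τ : Fin d → ℕ) (n : ℕ) :
    Asub p d τ n = MonoidAlgebra.supported (ZMod p) (ZMod p) {t : FreeMonoid (Fin d) | wt τ t = n} := by
  rw [Asub, MonoidAlgebra.supported_eq_span_single]
  congr 1
  ext x
  constructor
  · rintro ⟨t, ht, rfl⟩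
    exact ⟨t, ht, rfl⟩
  · rintro ⟨t, ht, rfl⟩
    exact ⟨t, ht, rfl⟩

lemma tsi_eq (p d m : ℕ) [Fact p.Prime] (w : Fin m → FreeMonoid (Fin d)) :
    tsi p d (Set.range fun j => MonoidAlgebra.of (ZMod p) (FreeMonoid (Fin d)) (w j))
      = MonoidAlgebra.supported (ZMod p) (ZMod p)
          {t : FreeMonoid (Fin d) | ∃ j u v, t = u * w j * v} := by
  classical
  apply le_antisymm
  · rw [tsi]
    rw [Submodule.span_le]
    rintro x ⟨a, s, b, ⟨j, rfl⟩, rfl⟩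
    rw [SetLike.mem_coe, MonoidAlgebra.mem_supported]
    intro t ht
    have h1 := MonoidAlgebra.support_coeff_mul_subset (a * MonoidAlgebra.of (ZMod p) _ (w j)) b ht
    rw [Finset.mem_mul] at h1
    obtain ⟨y, hy, v, hv, rfl⟩ := h1
    have h2 := MonoidAlgebra.support_coeff_mul_subset a (MonoidAlgebra.of (ZMod p) _ (w j)) hy
    rw [Finset.mem_mul] at h2
    obtain ⟨u, hu, s, hs, rfl⟩ := h2
    rw [MonoidAlgebra.of_apply, MonoidAlgebra.coeff_single, Finsupp.support_single_ne_zero _ one_ne_zero,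
      Finset.mem_singleton] at hs
    subst hs
    exact ⟨j, u, v, rfl⟩
  · rw [MonoidAlgebra.supported_eq_span_single, Submodule.span_le]
    rintro x ⟨t, ⟨j, u, v, rfl⟩, rfl⟩
    apply Submodule.subset_span
    refine ⟨MonoidAlgebra.of (ZMod p) _ u, MonoidAlgebra.of (ZMod p) _ (w j),
      MonoidAlgebra.of (ZMod p) _ v, ⟨j, rfl⟩, ?_⟩
    simp only [MonoidAlgebra.of_apply, MonoidAlgebra.single_mul_single, one_mul, mul_one]

lemma Sn_finite {d : ℕ} (τ : Fin d → ℕ) (hτ : ∀ i, 1 ≤ τ i) (n : ℕ) :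
    {t : FreeMonoid (Fin d) | wt τ t = n}.Finite := by
  apply Set.Finite.subset (Set.Finite.image FreeMonoid.ofList (List.finite_length_le (Fin d) n))
  intro t ht
  rw [Set.mem_setOf_eq] at ht
  refine ⟨t.toList, ?_, by simp⟩
  have := MildComb.length_le_sum τ hτ t.toList
  rw [wt] at ht
  simp only [Set.mem_setOf_eq]
  omega

lemma dimB_eq_c (p d m : ℕ) [Fact p.Prime] (τ : Fin d → ℕ) (hτ : ∀ i, 1 ≤ τ i)
    (w : Fin m → FreeMonoid (Fin d)) (k : ℤ) :
    dimB p d (tsi p d (Set.range fun j => MonoidAlgebra.of (ZMod p) (FreeMonoid (Fin d)) (w j)))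
        τ k
      = MildComb.c τ (fun j => (w j).toList) k := by
  by_cases hk : 0 ≤ k
  · rw [dimB, if_pos hk, Asub_eq, tsi_eq p d m w]
    refine (finrank_map_mkQ_msupported (ZMod p) _ _ (Sn_finite τ hτ k.toNat)).trans ?_
    rw [← Nat.card_coe_set_eq, MildComb.c]
    apply Nat.card_congr
    refine Equiv.subtypeEquiv FreeMonoid.toList (fun t => ?_)
    simp only [Set.mem_diff, Set.mem_setOf_eq, MildComb.GS, MildComb.Av]
    constructor
    · rintro ⟨h1, h2⟩
      refine ⟨?_, ?_⟩
      · rw [wt] at h1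
        rw [h1]
        exact Int.toNat_of_nonneg hk
      · rintro j ⟨a, b, hab⟩
        refine h2 ⟨j, FreeMonoid.ofList a, FreeMonoid.ofList b, ?_⟩
        apply FreeMonoid.toList.injective
        simpa [FreeMonoid.toList_mul, FreeMonoid.toList_ofList] using hab.symm
    · rintro ⟨h1, h2⟩
      refine ⟨?_, ?_⟩
      · rw [wt]
        omega
      · rintro ⟨j, u, v, rfl⟩
        refine h2 j ⟨u.toList, v.toList, ?_⟩
        simp [FreeMonoid.toList_mul]
  · rw [dimB, if_neg hk, MildComb.c_neg]
    omega

lemma combFree_iff {d' m' : ℕ} (w : Fin m' → FreeMonoid (Fin d')) :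
    CombFree w ↔ (MildComb2.CF1 (fun j => (w j).toList) ∧ MildComb2.CF2 (fun j => (w j).toList)) := by
  have hinj : Function.Injective (FreeMonoid.toList : FreeMonoid (Fin d') → List (Fin d')) :=
    FreeMonoid.toList.injective
  constructor
  · rintro ⟨h1, h2⟩
    constructor
    · rintro i j hij ⟨a, b, hab⟩
      refine h1 i j hij (FreeMonoid.ofList a) (FreeMonoid.ofList b) ?_
      apply hinj
      simpa [FreeMonoid.toList_mul, FreeMonoid.toList_ofList] using hab.symm
    · intro i j x y x' y' hx hy hx' hy' hxy hx'y' hxx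
      refine h2 i j (FreeMonoid.ofList x) (FreeMonoid.ofList y) (FreeMonoid.ofList x')
        (FreeMonoid.ofList y') ?_ ?_ ?_ ?_ ?_ ?_ (congrArg FreeMonoid.ofList hxx)
      · intro h; exact hx (by simpa using congrArg FreeMonoid.toList h)
      · intro h; exact hy (by simpa using congrArg FreeMonoid.toList h)
      · intro h; exact hx' (by simpa using congrArg FreeMonoid.toList h)
      · intro h; exact hy' (by simpa using congrArg FreeMonoid.toList h)
      · apply hinj; simpa [FreeMonoid.toList_mul, FreeMonoid.toList_ofList] using hxy
      · apply hinj; simpa [FreeMonoid.toList_mul, FreeMonoid.toList_ofList] using hx'y'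
  · rintro ⟨h1, h2⟩
    constructor
    · intro i j hij u v huv
      refine h1 i j hij ⟨u.toList, v.toList, ?_⟩
      simp [huv, FreeMonoid.toList_mul]
    · intro i j x y x' y' hx hy hx' hy' hxy hx'y' hxx
      refine h2 i j x.toList y.toList x'.toList y'.toList ?_ ?_ ?_ ?_ ?_ ?_
        (congrArg FreeMonoid.toList hxx)
      · intro h; exact hx (hinj (by simpa using h))
      · intro h; exact hy (hinj (by simpa using h))
      · intro h; exact hx' (hinj (by simpa using h))
      · intro h; exact hy' (hinj (by simpa using h))
      · simp [hxy, FreeMonoid.toList_mul]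
      · simp [hx'y', FreeMonoid.toList_mul]

end Bridge

/-- Anick: a sequence of monomials is strongly free iff the corresponding
sequence of words is combinatorially free. -/
theorem stmt_2 (p d m : ℕ) [Fact p.Prime] (hd : 1 ≤ d)
    (τ : Fin d → ℕ) (hτ : ∀ i, 1 ≤ τ i)
    (w : Fin m → FreeMonoid (Fin d)) (hw : ∀ j, w j ≠ 1) :
    StronglyFree p d τ (fun j => wt τ (w j))
        (fun j => MonoidAlgebra.of (ZMod p) (FreeMonoid (Fin d)) (w j)) ↔
      CombFree w := by
  have hWne : ∀ j, (w j).toList ≠ [] := by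
    intro j h
    apply hw j
    apply FreeMonoid.toList.injective
    simpa using h
  have hdim := dimB_eq_c p d m τ hτ w
  have hc0 : MildComb.c τ (fun j => (w j).toList) 0 = 1 :=
    MildComb.c_zero τ _ hτ hWne
  unfold StronglyFree
  simp only [hdim]
  constructor
  · rintro ⟨-, hrec⟩
    rw [combFree_iff]
    exact (MildComb2.recursion_iff_cf τ (fun j => (w j).toList) hτ hWne
      (fun j => wt τ (w j)) (fun j => rfl)).1 hrec
  · intro hcf
    exact ⟨hc0, (MildComb2.recursion_iff_cf τ (fun j => (w j).toList) hτ hWne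
      (fun j => wt τ (w j)) (fun j => rfl)).2 ((combFree_iff w).1 hcf)⟩

end MildStmt
end

section
/- Fix positive integer weights τ_1,…,τ_d, a subset U of the letters {X_1,…,X_d}, and a linear order on the letters. For a word w = X_{i_1}⋯X_{i_ℓ} define deg^τ(w) = τ_{i_1}+…+τ_{i_ℓ}, l^U(w) = #{k : X_{i_k} ∉ U}, and k^U(w) = Σ_{k : X_{i_k} ∉ U} (τ_{i_1}+…+τ_{i_k}). Let <' be the length-then-lexicographic order on words: w <' w' iff length(w) < length(w'), or the lengths are equal and w precedes w' lexicographically with respect to the chosen order on letters. Define w <_U w' iff the triple (deg^τ(w), l^U(w), k^U(w)) is lexicographically smaller than (deg^τ(w'), l^U(w'), k^U(w')), or the two triples are equal and w <' w'. Then <_U is a multiplicative order on the set of words: it is a strict total order, the empty word 1 satisfies 1 <_U α for every word α ≠ 1, and α <_U α' implies β·α·γ <_U β·α'·γ for all words β, γ. -/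
namespace MildStmt

/-- `l^U(w)`: the number of letters of `w` not belonging to `U`. -/
def lU {d : ℕ} (U : Finset (Fin d)) (w : FreeMonoid (Fin d)) : ℕ :=
  (w.toList.filter (fun i => decide (i ∉ U))).length

/-- `k^U(w) = Σ_{k : X_{i_k} ∉ U} deg^τ(X_{i_1}⋯X_{i_k})`, the sum over the positions `k`
whose letter is not in `U` of the `τ`-weight of the prefix of `w` of length `k`. -/
def kU {d : ℕ} (τ : Fin d → ℕ) (U : Finset (Fin d)) (w : FreeMonoid (Fin d)) : ℕ :=
  ((w.toList.zipIdx.map Prod.swap).map (fun q =>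
    if q.2 ∈ U then 0 else ((w.toList.take (q.1 + 1)).map τ).sum)).sum

/-- The length-then-lexicographic order `<'` on words, with respect to a strict order
`ltr` on the letters. -/
def lenLex {d : ℕ} (ltr : Fin d → Fin d → Prop) (w w' : FreeMonoid (Fin d)) : Prop :=
  w.toList.length < w'.toList.length ∨
    (w.toList.length = w'.toList.length ∧ List.Lex ltr w.toList w'.toList)

/-- The order `<_U` on words: compare the triples `(deg^τ, l^U, k^U)` lexicographically,
and break ties by the length-then-lexicographic order `<'`. -/
def ltU {d : ℕ} (τ : Fin d → ℕ) (U : Finset (Fin d)) (ltr : Fin d → Fin d → Prop)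
    (w w' : FreeMonoid (Fin d)) : Prop :=
  wt τ w < wt τ w' ∨
    (wt τ w = wt τ w' ∧
      (lU U w < lU U w' ∨
        (lU U w = lU U w' ∧
          (kU τ U w < kU τ U w' ∨
            (kU τ U w = kU τ U w' ∧ lenLex ltr w w')))))



@[simp] def _root_.List.enumFrom {α : Type*} (n : ℕ) (l : List α) : List (ℕ × α) :=
  (l.zipIdx n).map Prod.swap

@[simp] def _root_.List.enum {α : Type*} (l : List α) : List (ℕ × α) :=
  l.zipIdx.map Prod.swap

theorem _root_.List.enum_map_snd {α : Type*} (l : List α) : l.enum.map Prod.snd = l := by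
  simp only [List.enum, List.map_map]
  exact List.zipIdx_map_fst 0 l

section Aux

variable {d : ℕ} (τ : Fin d → ℕ) (U : Finset (Fin d))

def cnt (l : List (Fin d)) : ℕ := (l.filter (fun i => decide (i ∉ U))).length

def wtl (l : List (Fin d)) : ℕ := (l.map τ).sum

def kf (l : List (Fin d)) : ℕ :=
  ((l.enum).map (fun q =>
    if q.2 ∈ U then 0 else ((l.take (q.1 + 1)).map τ).sum)).sum

lemma sum_map_add {α : Type*} (f g : α → ℕ) (l : List α) :
    (l.map (fun x => f x + g x)).sum = (l.map f).sum + (l.map g).sum := by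
  induction l with
  | nil => simp
  | cons a l ih => simp [ih]; omega

lemma enumFrom_sum : ∀ (g : ℕ → Fin d → ℕ) (l : List (Fin d)) (n : ℕ),
    ((l.enumFrom n).map (fun q => g q.1 q.2)).sum
      = ((l.enum).map (fun q => g (q.1 + n) q.2)).sum := by
  intro g l
  induction l generalizing g with
  | nil => intro n; simp
  | cons a l ih =>
    intro n
    have h1 : (a :: l).enumFrom n = (n, a) :: l.enumFrom (n + 1) := rfl
    have h2 : (a :: l).enum = (0, a) :: l.enumFrom 1 := rfl
    rw [h1, h2, List.map_cons, List.sum_cons, List.map_cons, List.sum_cons,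
      ih g (n + 1), ih (fun k b => g (k + n) b) 1]
    simp only [Nat.zero_add]
    have : (fun q : ℕ × Fin d => g (q.1 + (n + 1)) q.2) = (fun q : ℕ × Fin d => g (q.1 + 1 + n) q.2) := by
      funext q; congr 1; omega
    rw [this]

lemma enum_snd_sum (h : Fin d → ℕ) (l : List (Fin d)) :
    ((l.enum).map (fun q => h q.2)).sum = (l.map h).sum := by
  have : (l.enum).map (fun q => h q.2) = (l.enum.map Prod.snd).map h := by
    rw [List.map_map]; rfl
  rw [this, List.enum_map_snd]

lemma sum_const_notU (c : ℕ) (l : List (Fin d)) :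
    (l.map (fun b => if b ∈ U then 0 else c)).sum = c * cnt U l := by
  induction l with
  | nil => simp [cnt]
  | cons a l ih =>
    by_cases ha : a ∈ U
    · simp [cnt, List.filter_cons, ha, ih]
    · simp [cnt, List.filter_cons, ha, ih]; ring

lemma kf_cons (a : Fin d) (l : List (Fin d)) :
    kf τ U (a :: l) = (if a ∈ U then 0 else τ a) + τ a * cnt U l + kf τ U l := by
  have h2 : (a :: l).enum = (0, a) :: l.enumFrom 1 := rfl
  rw [kf, h2, List.map_cons, List.sum_cons]
  rw [enumFrom_sum (fun k b => if b ∈ U then 0 else (((a :: l).take (k + 1)).map τ).sum) l 1]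
  have hterm : ∀ q : ℕ × Fin d,
      (if q.2 ∈ U then 0 else (((a :: l).take (q.1 + 1 + 1)).map τ).sum)
        = (if q.2 ∈ U then 0 else τ a) + (if q.2 ∈ U then 0 else ((l.take (q.1 + 1)).map τ).sum) := by
    intro q
    by_cases hq : q.2 ∈ U <;> simp [hq, List.take_succ_cons]
  simp only [hterm]
  rw [sum_map_add]
  rw [enum_snd_sum (fun b => if b ∈ U then 0 else τ a) l, sum_const_notU]
  simp only [List.take_succ_cons, List.take_zero, List.map_cons, List.map_nil, List.sum_cons,
    List.sum_nil, Nat.add_zero]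
  rw [kf]
  omega

lemma cnt_append (l1 l2 : List (Fin d)) : cnt U (l1 ++ l2) = cnt U l1 + cnt U l2 := by
  simp [cnt, List.filter_append]

lemma wtl_append (l1 l2 : List (Fin d)) : wtl τ (l1 ++ l2) = wtl τ l1 + wtl τ l2 := by
  simp [wtl]

lemma kf_append (l1 l2 : List (Fin d)) :
    kf τ U (l1 ++ l2) = kf τ U l1 + kf τ U l2 + wtl τ l1 * cnt U l2 := by
  induction l1 with
  | nil => simp [kf, wtl]
  | cons a l1 ih =>
    rw [List.cons_append, kf_cons, kf_cons, ih, cnt_append]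
    have : wtl τ (a :: l1) = τ a + wtl τ l1 := by simp [wtl]
    rw [this]
    ring

end Aux

section Main

variable {d : ℕ} (τ : Fin d → ℕ) (U : Finset (Fin d)) (ltr : Fin d → Fin d → Prop)

lemma wt_mul (u v : FreeMonoid (Fin d)) : wt τ (u * v) = wt τ u + wt τ v := by
  show wtl τ (u * v).toList = wtl τ u.toList + wtl τ v.toList
  rw [FreeMonoid.toList_mul, wtl_append]

lemma lU_mul (u v : FreeMonoid (Fin d)) : lU U (u * v) = lU U u + lU U v := by
  show cnt U (u * v).toList = cnt U u.toList + cnt U v.toList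
  rw [FreeMonoid.toList_mul, cnt_append]

lemma kU_mul (u v : FreeMonoid (Fin d)) :
    kU τ U (u * v) = kU τ U u + kU τ U v + wt τ u * lU U v := by
  show kf τ U (u * v).toList = kf τ U u.toList + kf τ U v.toList + wtl τ u.toList * cnt U v.toList
  rw [FreeMonoid.toList_mul, kf_append]

lemma lex_append_of_length_eq {l1 l2 : List (Fin d)} (g : List (Fin d))
    (hlen : l1.length = l2.length) (h : List.Lex ltr l1 l2) :
    List.Lex ltr (l1 ++ g) (l2 ++ g) := by
  induction h with
  | nil => simp at hlen
  | @cons a l₁ l₂ h ih => exact List.Lex.cons (ih (by simpa using hlen))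
  | rel h => exact List.Lex.rel h

lemma toList_inj {u v : FreeMonoid (Fin d)} (h : u.toList = v.toList) : u = v := by
  have := congrArg FreeMonoid.ofList h
  rwa [FreeMonoid.ofList_toList, FreeMonoid.ofList_toList] at this

/-- for positive weights `τ`, any subset `U` of the letters, and any strict
total (linear) order on the letters, the relation `<_U` is a multiplicative order on the
set of words: a strict total order in which the empty word is smallest and which is
compatible with two-sided multiplication. -/
theorem stmt_3 (d : ℕ) (τ : Fin d → ℕ) (hτ : ∀ i, 1 ≤ τ i)
    (U : Finset (Fin d)) (ltr : Fin d → Fin d → Prop)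
    (hirr : ∀ a : Fin d, ¬ ltr a a)
    (htrans : ∀ a b c : Fin d, ltr a b → ltr b c → ltr a c)
    (htri : ∀ a b : Fin d, ltr a b ∨ a = b ∨ ltr b a) :
    (∀ w : FreeMonoid (Fin d), ¬ ltU τ U ltr w w) ∧
    (∀ w w' w'' : FreeMonoid (Fin d),
      ltU τ U ltr w w' → ltU τ U ltr w' w'' → ltU τ U ltr w w'') ∧
    (∀ w w' : FreeMonoid (Fin d), ltU τ U ltr w w' ∨ w = w' ∨ ltU τ U ltr w' w) ∧
    (∀ w : FreeMonoid (Fin d), w ≠ 1 → ltU τ U ltr 1 w) ∧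
    (∀ α α' β γ : FreeMonoid (Fin d),
      ltU τ U ltr α α' → ltU τ U ltr (β * α * γ) (β * α' * γ)) := by
  haveI hT1 : IsTrichotomous (Fin d) ltr :=
    ⟨fun a b h1 h2 => by rcases htri a b with h | h | h <;> tauto⟩
  haveI hT2 : IsTrans (Fin d) ltr := ⟨htrans⟩
  haveI hT3 : IsIrrefl (Fin d) ltr := ⟨hirr⟩
  haveI hT4 : IsAsymm (Fin d) ltr := ⟨fun a b h h' => hirr a (htrans _ _ _ h h')⟩
  haveI hT5 : IsStrictTotalOrder (Fin d) ltr := { }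
  have lexIrrefl : ∀ l : List (Fin d), ¬ List.Lex ltr l l := fun l => irrefl_of _ l
  have lexTrans : ∀ l1 l2 l3 : List (Fin d),
      List.Lex ltr l1 l2 → List.Lex ltr l2 l3 → List.Lex ltr l1 l3 :=
    fun l1 l2 l3 h1 h2 => List.lex_trans (fun h1 h2 => htrans _ _ _ h1 h2) h1 h2
  have lexTri : ∀ l1 l2 : List (Fin d),
      List.Lex ltr l1 l2 ∨ l1 = l2 ∨ List.Lex ltr l2 l1 := fun l1 l2 => trichotomous_of _ _ _
  refine ⟨?_, ?_, ?_, ?_, ?_⟩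
  · -- irreflexivity
    intro w h
    rcases h with h | ⟨-, h | ⟨-, h | ⟨-, h | ⟨-, h⟩⟩⟩⟩
    · exact lt_irrefl _ h
    · exact lt_irrefl _ h
    · exact lt_irrefl _ h
    · exact lt_irrefl _ h
    · exact lexIrrefl _ h
  · -- transitivity
    intro w w' w'' h1 h2
    rcases h1 with h1 | ⟨e1, h1⟩
    · rcases h2 with h2 | ⟨e2, h2⟩
      · exact Or.inl (h1.trans h2)
      · exact Or.inl (e2 ▸ h1)
    · rcases h2 with h2 | ⟨e2, h2⟩
      · exact Or.inl (e1 ▸ h2)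
      · refine Or.inr ⟨e1.trans e2, ?_⟩
        rcases h1 with h1 | ⟨f1, h1⟩
        · rcases h2 with h2 | ⟨f2, h2⟩
          · exact Or.inl (h1.trans h2)
          · exact Or.inl (f2 ▸ h1)
        · rcases h2 with h2 | ⟨f2, h2⟩
          · exact Or.inl (f1 ▸ h2)
          · refine Or.inr ⟨f1.trans f2, ?_⟩
            rcases h1 with h1 | ⟨g1, h1⟩
            · rcases h2 with h2 | ⟨g2, h2⟩
              · exact Or.inl (h1.trans h2)
              · exact Or.inl (g2 ▸ h1)
            · rcases h2 with h2 | ⟨g2, h2⟩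
              · exact Or.inl (g1 ▸ h2)
              · refine Or.inr ⟨g1.trans g2, ?_⟩
                rcases h1 with h1 | ⟨i1, h1⟩
                · rcases h2 with h2 | ⟨i2, h2⟩
                  · exact Or.inl (h1.trans h2)
                  · exact Or.inl (i2 ▸ h1)
                · rcases h2 with h2 | ⟨i2, h2⟩
                  · exact Or.inl (i1 ▸ h2)
                  · exact Or.inr ⟨i1.trans i2, lexTrans _ _ _ h1 h2⟩
  · -- trichotomy
    intro w w'
    rcases Nat.lt_trichotomy (wt τ w) (wt τ w') with h | h | h
    · exact Or.inl (Or.inl h)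
    · rcases Nat.lt_trichotomy (lU U w) (lU U w') with h' | h' | h'
      · exact Or.inl (Or.inr ⟨h, Or.inl h'⟩)
      · rcases Nat.lt_trichotomy (kU τ U w) (kU τ U w') with h'' | h'' | h''
        · exact Or.inl (Or.inr ⟨h, Or.inr ⟨h', Or.inl h''⟩⟩)
        · rcases Nat.lt_trichotomy w.toList.length w'.toList.length with h3 | h3 | h3
          · exact Or.inl (Or.inr ⟨h, Or.inr ⟨h', Or.inr ⟨h'', Or.inl h3⟩⟩⟩)
          · rcases lexTri w.toList w'.toList with h4 | h4 | h4
            · exact Or.inl (Or.inr ⟨h, Or.inr ⟨h', Or.inr ⟨h'', Or.inr ⟨h3, h4⟩⟩⟩⟩)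
            · exact Or.inr (Or.inl (toList_inj h4))
            · exact Or.inr (Or.inr (Or.inr ⟨h.symm, Or.inr ⟨h'.symm,
                Or.inr ⟨h''.symm, Or.inr ⟨h3.symm, h4⟩⟩⟩⟩))
          · exact Or.inr (Or.inr (Or.inr ⟨h.symm, Or.inr ⟨h'.symm,
              Or.inr ⟨h''.symm, Or.inl h3⟩⟩⟩))
        · exact Or.inr (Or.inr (Or.inr ⟨h.symm, Or.inr ⟨h'.symm, Or.inl h''⟩⟩))
      · exact Or.inr (Or.inr (Or.inr ⟨h.symm, Or.inl h'⟩))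
    · exact Or.inr (Or.inr (Or.inl h))
  · -- 1 is smallest
    intro w hw
    left
    have h1 : wt τ (1 : FreeMonoid (Fin d)) = 0 := rfl
    rw [h1]
    cases hl : w.toList with
    | nil =>
      exact absurd (toList_inj (by simp [hl])) hw
    | cons a t =>
      have : wt τ w = τ a + (t.map τ).sum := by
        show wtl τ w.toList = _
        rw [hl]; simp [wtl]
      have := hτ a
      omega
  · -- multiplicativity
    intro α α' β γ h
    rcases h with h | ⟨e1, h | ⟨e2, h | ⟨e3, h⟩⟩⟩
    · exact Or.inl (by simp only [wt_mul]; omega)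
    · refine Or.inr ⟨by simp only [wt_mul]; omega, Or.inl ?_⟩
      simp only [lU_mul]; omega
    · refine Or.inr ⟨by simp only [wt_mul]; omega, Or.inr ⟨by simp only [lU_mul]; omega, Or.inl ?_⟩⟩
      simp only [kU_mul, wt_mul, lU_mul, ← e1, ← e2]
      have h1 : kU τ U α < kU τ U α' := h
      nlinarith [Nat.mul_le_mul_left (wt τ β) (le_of_eq (rfl : lU U α = lU U α))]
    · refine Or.inr ⟨by simp only [wt_mul]; omega,
        Or.inr ⟨by simp only [lU_mul]; omega,
        Or.inr ⟨?_, ?_⟩⟩⟩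
      · simp only [kU_mul, wt_mul, lU_mul, ← e1, ← e2, ← e3]
      · rcases h with h | ⟨hlen, hlex⟩
        · left
          simp only [FreeMonoid.toList_mul, List.length_append]
          omega
        · right
          constructor
          · simp only [FreeMonoid.toList_mul, List.length_append]
            omega
          · simp only [FreeMonoid.toList_mul]
            rw [List.append_assoc, List.append_assoc]
            exact List.Lex.append_left ltr
              (lex_append_of_length_eq ltr γ.toList hlen hlex) β.toList

end Main

end MildStmt
end

section
/- Let V and W be vector spaces over F_p, n ≥ 2, and let μ : V^n → W be a multilinear map satisfying the shuffle identities. Then the diagonal map B_n : V → W defined by B_n(χ) = μ(χ, χ, …, χ) is additive, hence F_p-linear; moreover, if n is not a power of p, then B_n is identically zero. -/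
namespace MildStmt

/-- An `(a, n−a)`-shuffle (positions `0,…,n−1`, first block `0,…,a−1`): a permutation `f`
of `{0,…,n−1}` such that `f i < f j` whenever `i < j` and both `i, j` lie in the first
block or both lie in the second block. -/
def IsShuffle (n a : ℕ) (f : Equiv.Perm (Fin n)) : Prop :=
  ∀ i j : Fin n, i < j → ((j : ℕ) < a ∨ a ≤ (i : ℕ)) → f i < f j

instance (n a : ℕ) (f : Equiv.Perm (Fin n)) : Decidable (IsShuffle n a f) := by
  unfold IsShuffle; infer_instance

/-- A multilinear map `μ : V^n → W` satisfies the shuffle identities if for all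
`a, b ≥ 1` with `a + b = n` and all `ξ_1,…,ξ_n ∈ V`, the sum of
`μ(ξ_{f⁻¹(1)},…,ξ_{f⁻¹(n)})` over all `(a,b)`-shuffles `f` vanishes. -/
def ShuffleIdentities (p n : ℕ) {V W : Type} [AddCommGroup V] [AddCommGroup W]
    [Module (ZMod p) V] [Module (ZMod p) W]
    (μ : MultilinearMap (ZMod p) (fun _ : Fin n => V) W) : Prop :=
  ∀ a b : ℕ, 1 ≤ a → 1 ≤ b → a + b = n → ∀ ξ : Fin n → V,
    (∑ f : Equiv.Perm (Fin n),
      if IsShuffle n a f then μ (fun i => ξ (f⁻¹ i)) else 0) = 0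

/-! ### Auxiliary material: the bijection between shuffles and subsets -/

variable {n : ℕ}

/-- The shuffle associated to a set `S` of size `a`. -/
noncomputable def shuffleOf (a b : ℕ) (hab : a + b = n) (S : Finset (Fin n))
    (hS : S.card = a) : Equiv.Perm (Fin n) :=
  (finCongr hab.symm).trans <| finSumFinEquiv.symm.trans <|
    (Equiv.sumCongr (S.orderIsoOfFin hS).toEquiv
      ((Sᶜ.orderIsoOfFin (by rw [Finset.card_compl, hS, Fintype.card_fin]; omega)).toEquiv.trans
        (Equiv.subtypeEquivRight (fun x => Finset.mem_compl)))).trans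
    (Equiv.sumCompl (· ∈ S))

lemma shuffleOf_apply_lt (a b : ℕ) (hab : a + b = n) (S : Finset (Fin n)) (hS : S.card = a)
    (i : Fin n) (hi : (i : ℕ) < a) :
    shuffleOf a b hab S hS i = S.orderEmbOfFin hS ⟨i, hi⟩ := by
  have h1 : (finCongr hab.symm) i = Fin.castAdd b ⟨i, hi⟩ := by ext; simp
  simp only [shuffleOf, Equiv.trans_apply, h1, finSumFinEquiv_symm_apply_castAdd]
  simp [Finset.coe_orderIsoOfFin_apply]

lemma shuffleOf_apply_ge (a b : ℕ) (hab : a + b = n) (S : Finset (Fin n)) (hS : S.card = a)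
    (hSc : Sᶜ.card = b)
    (i : Fin n) (hi : a ≤ (i : ℕ)) :
    shuffleOf a b hab S hS i = Sᶜ.orderEmbOfFin hSc ⟨(i : ℕ) - a, by omega⟩ := by
  have hi2 : (i : ℕ) - a < b := by omega
  have h1 : (finCongr hab.symm) i = Fin.natAdd a ⟨(i : ℕ) - a, hi2⟩ := by ext; simp; omega
  simp only [shuffleOf, Equiv.trans_apply, h1, finSumFinEquiv_symm_apply_natAdd]
  simp [Finset.coe_orderIsoOfFin_apply]

lemma shuffleOf_mem_iff (a b : ℕ) (hab : a + b = n) (S : Finset (Fin n)) (hS : S.card = a)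
    (i : Fin n) : shuffleOf a b hab S hS i ∈ S ↔ (i : ℕ) < a := by
  have hSc : Sᶜ.card = b := by rw [Finset.card_compl, hS, Fintype.card_fin]; omega
  rcases lt_or_ge (i : ℕ) a with hi | hi
  · simp [shuffleOf_apply_lt a b hab S hS i hi, hi, Finset.orderEmbOfFin_mem]
  · rw [shuffleOf_apply_ge a b hab S hS hSc i hi]
    have := Finset.orderEmbOfFin_mem Sᶜ hSc ⟨(i : ℕ) - a, by omega⟩
    rw [Finset.mem_compl] at this
    simp only [this, false_iff]; omega

lemma isShuffle_shuffleOf (a b : ℕ) (hab : a + b = n) (S : Finset (Fin n)) (hS : S.card = a) :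
    IsShuffle n a (shuffleOf a b hab S hS) := by
  have hSc : Sᶜ.card = b := by rw [Finset.card_compl, hS, Fintype.card_fin]; omega
  intro i j hij hblk
  rcases hblk with hj | hi
  · have hi : (i : ℕ) < a := lt_trans hij hj
    rw [shuffleOf_apply_lt a b hab S hS i hi, shuffleOf_apply_lt a b hab S hS j hj]
    exact (S.orderEmbOfFin hS).strictMono (by exact hij)
  · have hj : a ≤ (j : ℕ) := le_trans hi (le_of_lt hij)
    rw [shuffleOf_apply_ge a b hab S hS hSc i hi, shuffleOf_apply_ge a b hab S hS hSc j hj]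
    exact (Sᶜ.orderEmbOfFin hSc).strictMono (by simp [Fin.lt_def]; omega)

/-- Uniqueness: a shuffle is determined by the image of the first block. -/
lemma shuffle_eq_shuffleOf (a b : ℕ) (hab : a + b = n) (S : Finset (Fin n)) (hS : S.card = a)
    (f : Equiv.Perm (Fin n)) (hf : IsShuffle n a f)
    (hfS : ∀ i : Fin n, f i ∈ S ↔ (i : ℕ) < a) :
    f = shuffleOf a b hab S hS := by
  have hSc : Sᶜ.card = b := by rw [Finset.card_compl, hS, Fintype.card_fin]; omega
  have han : a ≤ n := by omega
  have hg : (fun k : Fin a => f ⟨(k : ℕ), lt_of_lt_of_le k.2 han⟩) = S.orderEmbOfFin hS := by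
    apply Finset.orderEmbOfFin_unique
    · intro k; rw [hfS]; exact k.2
    · intro k l hkl
      exact hf _ _ (Fin.mk_lt_mk.mpr hkl) (Or.inl l.2)
  have hg' : (fun k : Fin b => f ⟨a + (k : ℕ), by omega⟩) = Sᶜ.orderEmbOfFin hSc := by
    apply Finset.orderEmbOfFin_unique
    · intro k; rw [Finset.mem_compl, hfS]; show ¬ a + (k : ℕ) < a; omega
    · intro k l hkl
      exact hf _ _ (Fin.mk_lt_mk.mpr (by exact Nat.add_lt_add_left hkl a))
        (Or.inr (by show a ≤ a + (k : ℕ); omega))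
  ext i
  rcases lt_or_ge (i : ℕ) a with hi | hi
  · rw [shuffleOf_apply_lt a b hab S hS i hi, ← hg]
  · rw [shuffleOf_apply_ge a b hab S hS hSc i hi, ← hg']
    have hcongr : i = (⟨a + ((i : ℕ) - a), by omega⟩ : Fin n) :=
      Fin.ext (by show (i : ℕ) = a + ((i : ℕ) - a); omega)
    exact congrArg (fun x => ((f x : Fin n) : ℕ)) hcongr

lemma card_filter_lt (a : ℕ) (han : a < n) :
    (Finset.univ.filter fun i : Fin n => (i : ℕ) < a).card = a := by
  have : (Finset.univ.filter fun i : Fin n => (i : ℕ) < a) = Finset.Iio (⟨a, han⟩ : Fin n) := by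
    ext x; simp [Finset.mem_Iio, Fin.lt_def]
  rw [this, Fin.card_Iio]

lemma card_toS (a : ℕ) (han : a < n) (f : Equiv.Perm (Fin n)) :
    (Finset.univ.filter fun x : Fin n => ((f⁻¹ x : Fin n) : ℕ) < a).card = a := by
  have : (Finset.univ.filter fun x : Fin n => ((f⁻¹ x : Fin n) : ℕ) < a)
      = Finset.image f (Finset.univ.filter fun i : Fin n => (i : ℕ) < a) := by
    ext x
    simp only [Finset.mem_filter, Finset.mem_image, Finset.mem_univ, true_and]
    constructor
    · intro h; exact ⟨f⁻¹ x, h, by simp⟩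
    · rintro ⟨i, hi, rfl⟩; simpa using hi
  rw [this, Finset.card_image_of_injective _ f.injective, card_filter_lt a han]

/-- The sum over `(a,b)`-shuffles of a quantity depending only on the image of the first
block equals the sum over subsets of cardinality `a`. -/
lemma sum_shuffle_eq {M : Type} [AddCommMonoid M] (a b : ℕ) (hb : 1 ≤ b)
    (hab : a + b = n) (g : Finset (Fin n) → M) :
    (∑ f : Equiv.Perm (Fin n), if IsShuffle n a f then
        g (Finset.univ.filter fun x => ((f⁻¹ x : Fin n) : ℕ) < a) else 0)
      = ∑ S ∈ Finset.powersetCard a Finset.univ, g S := by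
  have han : a < n := by omega
  rw [Finset.sum_ite, Finset.sum_const_zero, add_zero]
  refine Finset.sum_bij'
    (i := fun f _ => Finset.univ.filter fun x : Fin n => ((f⁻¹ x : Fin n) : ℕ) < a)
    (j := fun S hS => shuffleOf a b hab S
      (by rw [Finset.mem_powersetCard_univ] at hS; exact hS))
    ?_ ?_ ?_ ?_ ?_
  · intro f hf
    rw [Finset.mem_powersetCard_univ]
    exact card_toS a han f
  · intro S hS
    simp only [Finset.mem_filter, Finset.mem_univ, true_and]
    exact isShuffle_shuffleOf a b hab S _
  · intro f hf
    simp only [Finset.mem_filter, Finset.mem_univ, true_and] at hf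
    refine (shuffle_eq_shuffleOf a b hab _ _ f hf ?_).symm
    intro i
    simp only [Finset.mem_filter, Finset.mem_univ, true_and, Equiv.Perm.inv_def, Equiv.symm_apply_apply]
  · intro S hS
    rw [Finset.mem_powersetCard_univ] at hS
    ext x
    simp only [Finset.mem_filter, Finset.mem_univ, true_and]
    rw [← shuffleOf_mem_iff a b hab S hS ((shuffleOf a b hab S hS)⁻¹ x)]
    simp
  · intro f hf; rfl

/-- If `n` is not a power of `p` then some binomial coefficient `C(n,a)` with `0 < a < n`
is not divisible by `p` (via Lucas' theorem). -/
lemma exists_choose_not_dvd (p n : ℕ) [hp : Fact p.Prime] (hn : 2 ≤ n)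
    (h : ¬ ∃ j : ℕ, n = p ^ j) :
    ∃ a : ℕ, 1 ≤ a ∧ a < n ∧ ¬ p ∣ n.choose a := by
  set k := n.factorization p with hk
  have hn0 : n ≠ 0 := by omega
  have hdvd : p ^ k ∣ n := Nat.ordProj_dvd n p
  have hple : p ^ k ≤ n := Nat.le_of_dvd (by omega) hdvd
  have hpk0 : p ^ k ≠ 0 := pow_ne_zero _ hp.out.pos.ne'
  have hlt : p ^ k < n := by
    rcases lt_or_eq_of_le hple with h' | h'
    · exact h'
    · exact absurd ⟨k, h'.symm⟩ h
  refine ⟨p ^ k, Nat.one_le_iff_ne_zero.mpr hpk0, hlt, ?_⟩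
  have hprod : ∏ i ∈ Finset.range k, (n / p ^ i % p).choose (p ^ k / p ^ i % p) = 1 := by
    refine Finset.prod_eq_one (fun i hi => ?_)
    rw [Finset.mem_range] at hi
    have hz : p ^ k / p ^ i % p = 0 := by
      rw [Nat.pow_div hi.le hp.out.pos]
      exact Nat.mod_eq_zero_of_dvd (dvd_pow_self p (by omega))
    rw [hz, Nat.choose_zero_right]
  have heq : (n / p ^ k).choose (p ^ k / p ^ k)
      * ∏ i ∈ Finset.range k, (n / p ^ i % p).choose (p ^ k / p ^ i % p) = n / p ^ k := by
    rw [Nat.div_self (Nat.pos_of_ne_zero hpk0), Nat.choose_one_right, hprod, mul_one]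
  have key : n.choose (p ^ k) ≡ n / p ^ k [MOD p] := by
    rw [← Int.natCast_modEq_iff]
    have H := Choose.choose_modEq_choose_mul_prod_range_choose (n := n) (k := p ^ k) (p := p) k
    rw [← heq]
    exact_mod_cast H
  intro hdvd'
  have h1 : (0 : ℕ) ≡ n / p ^ k [MOD p] :=
    ((Nat.modEq_zero_iff_dvd).mpr hdvd').symm.trans key
  have h2 : p ∣ n / p ^ k := Nat.modEq_zero_iff_dvd.mp h1.symm
  exact Nat.not_dvd_ordCompl hp.out hn0 h2

/-- if the multilinear map `μ : V^n → W` satisfies the shuffle identities,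
then the diagonal map `B_n(χ) = μ(χ,…,χ)` is additive, hence `F_p`-linear; and if `n` is
not a power of `p` then `B_n` is identically zero. -/
theorem stmt_7 (p n : ℕ) [Fact p.Prime] (hn : 2 ≤ n)
    (V W : Type) [AddCommGroup V] [AddCommGroup W]
    [Module (ZMod p) V] [Module (ZMod p) W]
    (μ : MultilinearMap (ZMod p) (fun _ : Fin n => V) W)
    (hμ : ShuffleIdentities p n μ) :
    (∀ χ ψ : V, μ (fun _ => χ + ψ) = μ (fun _ => χ) + μ (fun _ => ψ)) ∧
    (∀ (c : ZMod p) (χ : V), μ (fun _ => c • χ) = c • μ (fun _ => χ)) ∧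
    ((¬ ∃ j : ℕ, n = p ^ j) → ∀ χ : V, μ (fun _ => χ) = 0) := by
  -- the key vanishing statement
  have key : ∀ a : ℕ, 1 ≤ a → a < n → ∀ χ ψ : V,
      (∑ S ∈ Finset.powersetCard a Finset.univ,
        μ (fun i => if i ∈ S then χ else ψ)) = 0 := by
    intro a ha han χ ψ
    have hb : 1 ≤ n - a := by omega
    have hab : a + (n - a) = n := by omega
    rw [← sum_shuffle_eq a (n - a) hb hab
      (fun S => μ (fun i => if i ∈ S then χ else ψ))]
    have hid := hμ a (n - a) ha hb hab (fun j => if (j : ℕ) < a then χ else ψ)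
    refine Eq.trans (Finset.sum_congr rfl fun f _ => ?_) hid
    by_cases hf : IsShuffle n a f
    · simp only [hf, if_true]
      congr 1
      funext i
      by_cases hc : ((f⁻¹ i : Fin n) : ℕ) < a <;> simp [hc]
    · simp [hf]
  have hadd : ∀ χ ψ : V, μ (fun _ => χ + ψ) = μ (fun _ => χ) + μ (fun _ => ψ) := by
    intro χ ψ
    have hexp := μ.map_add_univ (fun _ => χ) (fun _ => ψ)
    have hL : μ (fun _ => χ + ψ)
        = ∑ s : Finset (Fin n), μ (s.piecewise (fun _ => χ) (fun _ => ψ)) := hexp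
    have hpw : ∀ s : Finset (Fin n), μ (s.piecewise (fun _ => χ) (fun _ => ψ))
        = μ (fun i => if i ∈ s then χ else ψ) := by
      intro s; congr 1
    rw [hL, Finset.sum_congr rfl (fun s _ => hpw s), ← Finset.powerset_univ,
      Finset.sum_powerset]
    simp only [Finset.card_univ, Fintype.card_fin]
    have hsub : ({0, n} : Finset ℕ) ⊆ Finset.range (n + 1) := by
      intro x hx
      simp only [Finset.mem_insert, Finset.mem_singleton] at hx
      rcases hx with rfl | rfl <;> simp [Finset.mem_range]
    rw [← Finset.sum_subset hsub ?_]
    · rw [Finset.sum_pair (by omega : (0 : ℕ) ≠ n)]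
      rw [Finset.powersetCard_zero, Finset.sum_singleton]
      have huniv : Finset.powersetCard n (Finset.univ : Finset (Fin n)) = {Finset.univ} := by
        have h := Finset.powersetCard_self (Finset.univ : Finset (Fin n))
        rwa [Finset.card_univ, Fintype.card_fin] at h
      rw [huniv]
      rw [Finset.sum_singleton]
      simp only [Finset.notMem_empty, if_false, Finset.mem_univ, if_true]
      rw [add_comm]
    · intro j hj hj'
      simp only [Finset.mem_insert, Finset.mem_singleton, not_or] at hj'
      rw [Finset.mem_range] at hj
      exact key j (by omega) (by omega) χ ψ
  refine ⟨hadd, ?_, ?_⟩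
  · -- scalar multiplication
    have h0 : μ (fun _ => (0 : V)) = 0 :=
      μ.map_coord_zero (⟨0, by omega⟩ : Fin n) rfl
    have hns : ∀ (k : ℕ) (χ : V), μ (fun _ => k • χ) = k • μ (fun _ => χ) := by
      intro k
      induction k with
      | zero => intro χ; simpa using h0
      | succ k ih =>
        intro χ
        have : ((k + 1 : ℕ) • χ) = k • χ + χ := by rw [succ_nsmul]
        calc μ (fun _ => (k + 1 : ℕ) • χ) = μ (fun _ => k • χ + χ) := by rw [this]
          _ = μ (fun _ => k • χ) + μ (fun _ => χ) := hadd _ _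
          _ = k • μ (fun _ => χ) + μ (fun _ => χ) := by rw [ih]
          _ = (k + 1 : ℕ) • μ (fun _ => χ) := by rw [succ_nsmul]
    intro c χ
    have hc : ((c.val : ZMod p)) = c := by rw [ZMod.natCast_val, ZMod.cast_id]
    calc μ (fun _ => c • χ) = μ (fun _ => c.val • χ) := by
          conv_lhs => rw [← hc, Nat.cast_smul_eq_nsmul]
      _ = c.val • μ (fun _ => χ) := hns c.val χ
      _ = ((c.val : ZMod p)) • μ (fun _ => χ) := by rw [Nat.cast_smul_eq_nsmul]
      _ = c • μ (fun _ => χ) := by rw [hc]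
  · -- not a power of p
    intro hpow χ
    obtain ⟨a, ha1, haln, hnd⟩ := exists_choose_not_dvd p n hn hpow
    have h3 : (∑ _S ∈ Finset.powersetCard a (Finset.univ : Finset (Fin n)),
        μ (fun _ => χ)) = 0 := by
      have hb : 1 ≤ n - a := by omega
      have hab : a + (n - a) = n := by omega
      rw [← sum_shuffle_eq a (n - a) hb hab (fun _ : Finset (Fin n) => μ (fun _ => χ))]
      exact hμ a (n - a) ha1 hb hab (fun _ => χ)
    rw [Finset.sum_const] at h3
    simp only [Finset.card_powersetCard, Finset.card_univ, Fintype.card_fin] at h3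
    have h4 : ((n.choose a : ZMod p)) • μ (fun _ => χ) = 0 := by
      rw [Nat.cast_smul_eq_nsmul]; exact h3
    have h5 : (n.choose a : ZMod p) ≠ 0 := by
      rw [Ne, ZMod.natCast_eq_zero_iff]
      exact hnd
    calc μ (fun _ => χ)
        = (n.choose a : ZMod p)⁻¹ • (((n.choose a : ZMod p)) • μ (fun _ => χ)) := by
          rw [smul_smul, inv_mul_cancel₀ h5, one_smul]
      _ = 0 := by rw [h4, smul_zero]

end MildStmt
end

section
/- Let V and W be vector spaces over F_p, n ≥ 2, and let μ : V^n → W be a multilinear map satisfying the shuffle identities. Suppose that for some χ, ψ ∈ V and some integer e with 1 ≤ e ≤ n one has μ(χ, …, χ, ψ, χ, …, χ) ≠ 0, where ψ occurs in position e (i.e., the argument is e−1 copies of χ, then ψ, then n−e copies of χ). Then μ(ψ, χ, …, χ) ≠ 0 (ψ in the first position followed by n−1 copies of χ). -/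
namespace MildStmt

set_option maxHeartbeats 1000000 in
lemma chain (g : ℕ → ℕ) (i j : ℕ) (hij : i ≤ j)
    (h : ∀ k, i ≤ k → k + 1 ≤ j → g k < g (k + 1)) :
    g i + (j - i) ≤ g j := by
  induction j, hij using Nat.le_induction with
  | base => simp
  | succ j hj ih =>
    have h1 : g j < g (j + 1) := h j hj le_rfl
    have h2 : g i + (j - i) ≤ g j := ih (fun k hk hk' => h k hk (by omega))
    omega

lemma shuffle_gap {n a : ℕ} {f : Equiv.Perm (Fin n)} (hf : IsShuffle n a f)
    (i j : Fin n) (hij : (i : ℕ) ≤ (j : ℕ)) (hb : (j : ℕ) < a ∨ a ≤ (i : ℕ)) :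
    (f i : ℕ) + ((j : ℕ) - (i : ℕ)) ≤ (f j : ℕ) := by
  have key := chain (fun k => if h : k < n then ((f ⟨k, h⟩ : Fin n) : ℕ) else 0)
      (i : ℕ) (j : ℕ) hij ?_
  · simpa [i.isLt, j.isLt] using key
  · intro k hk hk'
    have hk1 : k + 1 < n := lt_of_le_of_lt hk' j.isLt
    have hk0 : k < n := by omega
    simp only [dif_pos hk0, dif_pos hk1]
    have hlt : (⟨k, hk0⟩ : Fin n) < ⟨k + 1, hk1⟩ := by simp [Fin.lt_def]
    have hbl : ((⟨k + 1, hk1⟩ : Fin n) : ℕ) < a ∨ a ≤ ((⟨k, hk0⟩ : Fin n) : ℕ) := by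
      rcases hb with hb | hb
      · exact Or.inl (by simp; omega)
      · exact Or.inr (by simp; omega)
    exact hf ⟨k, hk0⟩ ⟨k + 1, hk1⟩ hlt hbl

lemma card_fib_zero {n a : ℕ} (hn : 0 < n) (ha : 1 ≤ a) (han : a ≤ n) (m : Fin n)
    (hm : n < (m : ℕ) + a) :
    (Finset.univ.filter fun f : Equiv.Perm (Fin n) =>
      IsShuffle n a f ∧ f ⟨0, hn⟩ = m).card = 0 := by
  rw [Finset.card_eq_zero, Finset.filter_eq_empty_iff]
  rintro f - ⟨hf, hf0⟩
  have hgap := shuffle_gap hf ⟨0, hn⟩ ⟨a - 1, by omega⟩ (by simp) (Or.inl (by simp; omega))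
  have hlt := (f ⟨a - 1, by omega⟩).isLt
  rw [hf0] at hgap
  simp at hgap
  omega

set_option maxHeartbeats 1600000 in
lemma card_fib_one {n a : ℕ} (hn : 0 < n) (ha : 1 ≤ a) (han : a < n) :
    (Finset.univ.filter fun f : Equiv.Perm (Fin n) =>
      IsShuffle n a f ∧ f ⟨0, hn⟩ = ⟨n - a, by omega⟩).card = 1 := by
  haveI : NeZero n := ⟨hn.ne'⟩
  set c : Fin n := ⟨n - a, by omega⟩ with hc
  set f₀ : Equiv.Perm (Fin n) := Equiv.addRight c with hf₀
  have hval : ∀ i : Fin n, (f₀ i : ℕ) = if (i : ℕ) < a then (i : ℕ) + (n - a) else (i : ℕ) - a := by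
    intro i
    have h1 : (f₀ i : ℕ) = ((i : ℕ) + (n - a)) % n := by
      simp [hf₀, Equiv.addRight, Fin.add_def, hc]
    rw [h1]
    split
    · exact Nat.mod_eq_of_lt (by omega)
    · have h2 : (i : ℕ) + (n - a) = ((i : ℕ) - a) + n := by omega
      rw [h2, Nat.add_mod_right]
      exact Nat.mod_eq_of_lt (by omega)
  have hshuf : IsShuffle n a f₀ := by
    intro i j hij hb
    have hi := hval i
    have hj := hval j
    rw [Fin.lt_def] at hij ⊢
    rcases hb with hb | hb
    · rw [hi, hj, if_pos (by omega), if_pos hb]; omega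
    · rw [hi, hj, if_neg (by omega), if_neg (by omega)]; omega
  have hmem : IsShuffle n a f₀ ∧ f₀ ⟨0, hn⟩ = ⟨n - a, by omega⟩ := by
    refine ⟨hshuf, ?_⟩
    have := hval ⟨0, hn⟩
    rw [if_pos (by show 0 < a; omega)] at this
    exact Fin.ext (by simpa using this)
  have huniq : ∀ f : Equiv.Perm (Fin n),
      IsShuffle n a f → f ⟨0, hn⟩ = ⟨n - a, by omega⟩ → f = f₀ := by
    intro f hf hf0
    -- first block values
    have hfb : ∀ k, (hk : k < a) → (f ⟨k, by omega⟩ : ℕ) = n - a + k := by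
      intro k hk
      have lb := shuffle_gap hf ⟨0, hn⟩ ⟨k, by omega⟩ (by simp) (Or.inl (by simpa using hk))
      have ub := shuffle_gap hf ⟨k, by omega⟩ ⟨a - 1, by omega⟩ (by simp; omega)
        (Or.inl (by simp; omega))
      have hlt := (f ⟨a - 1, by omega⟩).isLt
      rw [hf0] at lb
      simp at lb ub
      omega
    have hlast : (f ⟨n - 1, by omega⟩ : ℕ) < n - a := by
      by_contra hcon
      push_neg at hcon
      have hlt := (f ⟨n - 1, by omega⟩).isLt
      set t := (f ⟨n - 1, by omega⟩ : ℕ) with ht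
      have hk : t - (n - a) < a := by omega
      have h1 := hfb (t - (n - a)) hk
      have h2 : f ⟨t - (n - a), by omega⟩ = f ⟨n - 1, by omega⟩ := Fin.ext (by omega)
      have h3 := f.injective h2
      rw [Fin.ext_iff] at h3
      simp at h3
      omega
    have hsb : ∀ k, a ≤ k → (hk : k < n) → (f ⟨k, hk⟩ : ℕ) = k - a := by
      intro k hka hk
      have lb := shuffle_gap hf ⟨a, by omega⟩ ⟨k, hk⟩ (by simpa using hka) (Or.inr (by simp))
      have ub := shuffle_gap hf ⟨k, hk⟩ ⟨n - 1, by omega⟩ (by simp; omega)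
        (Or.inr (by simpa using hka))
      simp at lb ub
      omega
    ext i
    have h1 := hval i
    rcases lt_or_ge (i : ℕ) a with hia | hia
    · have := hfb (i : ℕ) hia
      rw [Fin.eta] at this
      rw [this, h1, if_pos hia]; omega
    · have := hsb (i : ℕ) hia i.isLt
      rw [Fin.eta] at this
      rw [this, h1, if_neg (by omega)]
  have hsing : (Finset.univ.filter fun f : Equiv.Perm (Fin n) =>
      IsShuffle n a f ∧ f ⟨0, hn⟩ = ⟨n - a, by omega⟩) = {f₀} := by
    apply Finset.eq_singleton_iff_unique_mem.mpr
    constructor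
    · simp only [Finset.mem_filter, Finset.mem_univ, true_and]
      exact hmem
    · intro f hmf
      simp only [Finset.mem_filter, Finset.mem_univ, true_and] at hmf
      exact huniq f hmf.1 hmf.2
  rw [hsing, Finset.card_singleton]

set_option maxHeartbeats 1600000 in
theorem stmt_8 (p n : ℕ) [Fact p.Prime] (hn : 2 ≤ n)
    (V W : Type) [AddCommGroup V] [AddCommGroup W]
    [Module (ZMod p) V] [Module (ZMod p) W]
    (μ : MultilinearMap (ZMod p) (fun _ : Fin n => V) W)
    (hμ : ShuffleIdentities p n μ)
    (χ ψ : V) (e : ℕ) (he1 : 1 ≤ e) (hen : e ≤ n)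
    (h : μ (fun i => if (i : ℕ) = e - 1 then ψ else χ) ≠ 0) :
    μ (fun i => if (i : ℕ) = 0 then ψ else χ) ≠ 0 := by
  intro h0
  have hn0 : 0 < n := by omega
  set z : Fin n := ⟨0, hn0⟩ with hz
  set v : Fin n → W := fun m => μ (fun i => if i = m then ψ else χ) with hv
  have hvv : ∀ m : Fin n, v m = μ (fun i => if (i : ℕ) = (m : ℕ) then ψ else χ) := by
    intro m
    show μ (fun i => if i = m then ψ else χ) = _
    congr 1
    funext i
    exact if_congr Fin.ext_iff rfl rfl
  have hv0 : v z = 0 := by rw [hvv z]; exact h0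
  have heq : ∀ a : ℕ, 1 ≤ a → a < n →
      ∑ m : Fin n, ((Finset.univ.filter fun f : Equiv.Perm (Fin n) =>
        IsShuffle n a f ∧ f z = m).card) • v m = 0 := by
    intro a ha han
    have h1 := hμ a (n - a) ha (by omega) (by omega) (fun i => if i = z then ψ else χ)
    rw [← Finset.sum_filter] at h1
    have h2 : ∀ f ∈ Finset.univ.filter (fun f : Equiv.Perm (Fin n) => IsShuffle n a f),
        μ (fun i => if f⁻¹ i = z then ψ else χ) = v (f z) := by
      intro f _
      show _ = μ (fun i => if i = f z then ψ else χ)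
      congr 1
      funext i
      refine if_congr ?_ rfl rfl
      constructor
      · intro hi; rw [← hi]; simp
      · intro hi; rw [hi]; simp
    rw [Finset.sum_congr rfl h2] at h1
    have h3 : ∑ f ∈ Finset.univ.filter (fun f : Equiv.Perm (Fin n) => IsShuffle n a f),
        v (f z) = ∑ m : Fin n, ∑ f ∈ (Finset.univ.filter
          (fun f : Equiv.Perm (Fin n) => IsShuffle n a f)).filter (fun f => f z = m), v m :=
      (Finset.sum_fiberwise' _ (fun f : Equiv.Perm (Fin n) => f z) v).symm
    rw [h3] at h1
    rw [← h1]
    apply Finset.sum_congr rfl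
    intro m _
    rw [Finset.sum_const, Finset.filter_filter]
  have key : ∀ k : ℕ, ∀ m : Fin n, (m : ℕ) = k → v m = 0 := by
    intro k
    induction k using Nat.strong_induction_on with
    | _ k ih =>
      intro m hm
      rcases Nat.eq_zero_or_pos k with hk0 | hk1
      · have : m = z := Fin.ext (by simp [hz]; omega)
        rw [this]; exact hv0
      · have hkn : k < n := hm ▸ m.isLt
        have ha1 : 1 ≤ n - k := by omega
        have han : n - k < n := by omega
        have hEq := heq (n - k) ha1 han
        rw [Finset.sum_eq_single m] at hEq
        · have hcard : (Finset.univ.filter fun f : Equiv.Perm (Fin n) =>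
              IsShuffle n (n - k) f ∧ f z = m).card = 1 := by
            have h4 := card_fib_one hn0 ha1 han
            have hmm : m = (⟨n - (n - k), by omega⟩ : Fin n) := Fin.ext (by simp; omega)
            rw [hmm]
            exact h4
          rw [hcard, one_smul] at hEq
          exact hEq
        · intro m' _ hm'
          rcases lt_or_ge (m' : ℕ) k with hlt | hge
          · rw [ih (m' : ℕ) hlt m' rfl, smul_zero]
          · have hgt : (m' : ℕ) > k := by
              rcases Nat.lt_or_ge k (m' : ℕ) with hA | hA
              · exact hA
              · exact absurd (Fin.ext (by omega) : m' = m) hm'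
            rw [card_fib_zero hn0 ha1 (by omega) m' (by omega), zero_smul]
        · intro hmem
          exact absurd (Finset.mem_univ m) hmem
  apply h
  have hfin := key (e - 1) ⟨e - 1, by omega⟩ rfl
  rw [hvv] at hfin
  exact hfin

end MildStmt
end

section
/- Let ρ_1,…,ρ_m ∈ I_A be homogeneous elements of positive degree, let R = (ρ_1,…,ρ_m) be the two-sided ideal of A they generate, and let R·I_A denote the F_p-span of all products r·y with r ∈ R and y ∈ I_A. Then the F_p-linear map (A/R)^d → I_A/(R·I_A) sending (a_1 mod R, …, a_d mod R) to (Σ_{i=1}^d a_i X_i) mod R·I_A is well defined and bijective; i.e., the left (A/R)-module I_A/(R·I_A) is free on the images of X_1,…,X_d. -/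
/-!
Setup: `A = F_p⟨X_1,…,X_d⟩`, the free associative algebra over `F_p` on `d`
noncommuting variables, realized as the monoid algebra of the free monoid on `Fin d`.
-/

namespace MildStmt

/-- `R·I_A`: the `F_p`-span of all products `r·y` with `r ∈ R`, `y ∈ I_A`. -/
noncomputable def RIA (p d : ℕ) (R : Submodule (ZMod p) (A p d)) : Submodule (ZMod p) (A p d) :=
  Submodule.span (ZMod p) {x | ∃ r ∈ R, ∃ y ∈ IA p d, x = r * y}

section Aux
variable {p d : ℕ}

private lemma concat_inj (i : Fin d) :
    Function.Injective (fun w : FreeMonoid (Fin d) => w * FreeMonoid.of i) :=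
  fun _ _ h => mul_right_cancel h

noncomputable def D (p d : ℕ) (i : Fin d) : A p d →ₗ[ZMod p] A p d :=
  (MonoidAlgebra.coeffLinearEquiv (ZMod p)).symm.toLinearMap ∘ₗ Finsupp.lcomapDomain _ (concat_inj i) ∘ₗ
    (MonoidAlgebra.coeffLinearEquiv (ZMod p)).toLinearMap

lemma D_apply (i : Fin d) (f : A p d) (w : FreeMonoid (Fin d)) :
    (D p d i f).coeff w = f.coeff (w * FreeMonoid.of i) := rfl

lemma X_eq (i : Fin d) :
    X p d i = MonoidAlgebra.single (FreeMonoid.of i) (1 : ZMod p) := rfl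

lemma mul_X_apply (f : A p d) (i : Fin d) (w : FreeMonoid (Fin d)) :
    (f * X p d i).coeff (w * FreeMonoid.of i) = f.coeff w := by
  rw [X_eq, MonoidAlgebra.coeff_mul_single_eq_coeff_mul w
    (fun a _ => ⟨fun h => mul_right_cancel h, fun h => by rw [h]⟩), mul_one]

lemma mul_X_apply_ne (f : A p d) {i j : Fin d} (hij : j ≠ i) (w : FreeMonoid (Fin d)) :
    (f * X p d j).coeff (w * FreeMonoid.of i) = 0 := by
  rw [X_eq]
  apply MonoidAlgebra.mul_single_apply_of_not_exists_mul
  rintro ⟨e, he⟩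
  apply congrArg FreeMonoid.toList at he
  simp only [FreeMonoid.toList_mul, FreeMonoid.toList_of] at he
  exact hij (List.head_eq_of_cons_eq (List.append_inj' he rfl).2).symm

lemma mul_X_apply_one (f : A p d) (i : Fin d) : (f * X p d i).coeff 1 = 0 := by
  rw [X_eq]
  apply MonoidAlgebra.mul_single_apply_of_not_exists_mul
  rintro ⟨e, he⟩
  apply congrArg FreeMonoid.toList at he
  simp at he

lemma fm_mul_eq_one {a b : FreeMonoid (Fin d)} : a * b = 1 ↔ a = 1 ∧ b = 1 := by
  constructor
  · intro h
    apply congrArg FreeMonoid.toList at h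
    simp only [FreeMonoid.toList_mul, FreeMonoid.toList_one, List.append_eq_nil_iff] at h
    exact ⟨FreeMonoid.toList.injective h.1, FreeMonoid.toList.injective h.2⟩
  · rintro ⟨rfl, rfl⟩; simp

lemma mul_apply_one (f g : A p d) : (f * g).coeff 1 = f.coeff 1 * g.coeff 1 := by
  have := MonoidAlgebra.mul_apply_antidiagonal f g 1 {((1 : FreeMonoid (Fin d)), (1 : FreeMonoid (Fin d)))}
    (fun {q} => by
      simp only [Finset.mem_singleton]
      constructor
      · rintro rfl; simp
      · intro h
        obtain ⟨h1, h2⟩ := fm_mul_eq_one.mp h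
        exact Prod.ext h1 h2)
  simpa using this

lemma decomp (f : A p d) :
    f = MonoidAlgebra.single 1 (f.coeff 1) + ∑ i, (D p d i f) * X p d i := by
  classical
  ext w
  rw [MonoidAlgebra.coeff_add, MonoidAlgebra.coeff_sum, Finsupp.add_apply, Finsupp.finset_sum_apply]
  rcases List.eq_nil_or_concat (FreeMonoid.toList w) with h | ⟨l, i₀, h⟩
  · have hw : w = 1 := FreeMonoid.toList.injective h
    subst hw
    simp [mul_X_apply_one]
  · have hw : w = FreeMonoid.ofList l * FreeMonoid.of i₀ :=
      FreeMonoid.toList.injective (by simpa using h)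
    subst hw
    rw [MonoidAlgebra.coeff_single, Finsupp.single_apply, if_neg, Finset.sum_eq_single i₀]
    · rw [mul_X_apply, D_apply]; ring
    · intro j _ hj
      exact mul_X_apply_ne _ hj _
    · intro h'; exact absurd (Finset.mem_univ i₀) h'
    · intro h'
      apply congrArg FreeMonoid.toList at h'
      simp at h'

end Aux
section Main
variable {p d : ℕ}

lemma D_mul_X (i j : Fin d) (g : A p d) :
    D p d i (g * X p d j) = if i = j then g else 0 := by
  classical
  ext w
  rw [D_apply]
  split_ifs with h
  · subst h; exact mul_X_apply g i w
  · rw [mul_X_apply_ne g (Ne.symm h) w]; simp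

lemma X_mem_IA (i : Fin d) : X p d i ∈ IA p d :=
  Submodule.subset_span ⟨1, X p d i, 1, ⟨i, rfl⟩, by simp⟩

lemma tsi_mul_right {S : Set (A p d)} {x : A p d} (hx : x ∈ tsi p d S) (c : A p d) :
    x * c ∈ tsi p d S := by
  induction hx using Submodule.span_induction with
  | mem y hy =>
    obtain ⟨a, s, b, hs, rfl⟩ := hy
    exact Submodule.subset_span ⟨a, s, b * c, hs, by rw [mul_assoc]⟩
  | zero => simp [Submodule.zero_mem]
  | add y z _ _ hy hz => rw [add_mul]; exact Submodule.add_mem _ hy hz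
  | smul r y _ hy => rw [smul_mul_assoc]; exact Submodule.smul_mem _ _ hy

lemma IA_coeff_one {x : A p d} (hx : x ∈ IA p d) : x.coeff 1 = 0 := by
  have hle : IA p d ≤ LinearMap.ker (Finsupp.lapply (M := ZMod p) (1 : FreeMonoid (Fin d)) ∘ₗ
      (MonoidAlgebra.coeffLinearEquiv (ZMod p)).toLinearMap) := by
    rw [IA, tsi, Submodule.span_le]
    rintro y ⟨a, s, b, ⟨i, rfl⟩, rfl⟩
    simp only [SetLike.mem_coe, LinearMap.mem_ker]
    show (a * X p d i * b).coeff 1 = 0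
    rw [mul_apply_one, mul_X_apply_one]
    ring
  simpa using hle hx

lemma D_RIA {S : Set (A p d)} {x : A p d} (hx : x ∈ RIA p d (tsi p d S)) (i : Fin d) :
    D p d i x ∈ tsi p d S := by
  classical
  have hle : RIA p d (tsi p d S) ≤ (tsi p d S).comap (D p d i) := by
    rw [RIA, Submodule.span_le]
    rintro z ⟨r, hr, y, hy, rfl⟩
    have hy1 : y.coeff 1 = 0 := IA_coeff_one hy
    have hdec := decomp y
    rw [hy1, MonoidAlgebra.single_zero, zero_add] at hdec
    have hry : r * y = ∑ j, (r * D p d j y) * X p d j := by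
      conv_lhs => rw [hdec]
      rw [Finset.mul_sum]
      exact Finset.sum_congr rfl fun j _ => (mul_assoc _ _ _).symm
    simp only [SetLike.mem_coe, Submodule.mem_comap]
    rw [hry, map_sum]
    have : ∀ j, D p d i ((r * D p d j y) * X p d j) = if i = j then r * D p d j y else 0 :=
      fun j => D_mul_X i j _
    simp only [this]
    rw [Finset.sum_ite_eq]
    split_ifs with h
    · exact tsi_mul_right hr _
    · exact Submodule.zero_mem _
  exact hle hx

lemma D_sum (a : Fin d → A p d) (i : Fin d) :
    D p d i (∑ j, a j * X p d j) = a i := by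
  classical
  rw [map_sum]
  simp only [D_mul_X]
  rw [Finset.sum_ite_eq]
  simp

end Main

/-- for homogeneous `ρ_1,…,ρ_m ∈ I_A` of positive degrees, with
`R = (ρ_1,…,ρ_m)`, the map `(A/R)^d → I_A/(R·I_A)`, `(a_i mod R) ↦ (Σ_i a_i X_i) mod R·I_A`,
is well defined and bijective: the left `(A/R)`-module `I_A/(R·I_A)` is free on the images
of `X_1,…,X_d`. -/
theorem stmt_9 (p d m : ℕ) [Fact p.Prime] (hd : 1 ≤ d)
    (τ : Fin d → ℕ) (hτ : ∀ i, 1 ≤ τ i)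
    (σ : Fin m → ℕ) (hσ : ∀ j, 1 ≤ σ j)
    (ρ : Fin m → A p d)
    (hρIA : ∀ j, ρ j ∈ IA p d)
    (hρhom : ∀ j, ρ j ∈ Asub p d τ (σ j)) :
    (∀ (i : Fin d), ∀ a ∈ tsi p d (Set.range ρ),
        a * X p d i ∈ RIA p d (tsi p d (Set.range ρ))) ∧
    (∀ a : Fin d → A p d,
        (∑ i, a i * X p d i) ∈ RIA p d (tsi p d (Set.range ρ)) →
          ∀ i, a i ∈ tsi p d (Set.range ρ)) ∧
    (∀ x ∈ IA p d, ∃ a : Fin d → A p d,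
        x - ∑ i, a i * X p d i ∈ RIA p d (tsi p d (Set.range ρ))) := by
  refine ⟨?_, ?_, ?_⟩
  · intro i a ha
    exact Submodule.subset_span ⟨a, ha, X p d i, X_mem_IA i, rfl⟩
  · intro a h i
    have hD := D_RIA h i
    rwa [D_sum] at hD
  · intro x hx
    refine ⟨fun i => D p d i x, ?_⟩
    have hdec := decomp x
    rw [IA_coeff_one hx, MonoidAlgebra.single_zero, zero_add] at hdec
    rw [← hdec, sub_self]
    exact Submodule.zero_mem _

end MildStmt
end

section
/- Let d ≥ 2, let 1 ≤ c < d, n ≥ 2 and 1 ≤ e ≤ n−1, and let w_1,…,w_m be pairwise distinct words of length n in the free monoid on the letters X_1,…,X_d such that for each j the first e letters of w_j belong to {X_1,…,X_c} and the last n−e letters of w_j belong to {X_{c+1},…,X_d}. Then the sequence of words w_1,…,w_m is combinatorially free. -/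
namespace MildStmt

/-- pairwise distinct words of length `n` whose first `e` letters lie in
`{X_1,…,X_c}` and whose last `n−e` letters lie in `{X_{c+1},…,X_d}` form a
combinatorially free sequence. -/
theorem stmt_11 (d c n e m : ℕ) (hd : 2 ≤ d) (hc1 : 1 ≤ c) (hcd : c < d)
    (hn : 2 ≤ n) (he1 : 1 ≤ e) (hen : e ≤ n - 1)
    (w : Fin m → FreeMonoid (Fin d))
    (hdist : Function.Injective w)
    (hlen : ∀ j, (w j).toList.length = n)
    (hfirst : ∀ j, ∀ x ∈ (w j).toList.take e, (x : Fin d).val < c)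
    (hlast : ∀ j, ∀ x ∈ (w j).toList.drop e, c ≤ (x : Fin d).val) :
    CombFree w := by
  constructor
  · -- factor-freeness
    intro i j hij u v heq
    have hl : (w j).toList = u.toList ++ (w i).toList ++ v.toList := by
      rw [heq, FreeMonoid.toList_mul, FreeMonoid.toList_mul]
    have hlen' := congrArg List.length hl
    simp only [List.length_append, hlen] at hlen'
    have hu : u.toList = [] := List.length_eq_zero_iff.mp (by omega)
    have hv : v.toList = [] := List.length_eq_zero_iff.mp (by omega)
    rw [hu, hv] at hl
    simp at hl
    exact hij (hdist hl).symm
  · -- overlap-freeness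
    intro i j x y x' y' hx hy hx' hy' hi hj hxy
    exfalso
    rw [← hxy] at hj
    set xl := x.toList with hxl
    set yl := y.toList with hyl
    set x'l := x'.toList with hx'l
    have hil : (w i).toList = xl ++ yl := by rw [hi, FreeMonoid.toList_mul]
    have hjl : (w j).toList = x'l ++ xl := by rw [hj, FreeMonoid.toList_mul]
    have hxne : xl ≠ [] := fun h => hx (FreeMonoid.toList.injective h)
    have hyne : yl ≠ [] := fun h => hy (FreeMonoid.toList.injective h)
    have hx'ne : x'l ≠ [] := fun h => hx' (FreeMonoid.toList.injective h)
    set k := xl.length with hk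
    have hk1 : 1 ≤ k := List.length_pos_iff.mpr hxne
    have hleni : k + yl.length = n := by
      have := hlen i; rw [hil, List.length_append] at this; omega
    have hlenj : x'l.length + k = n := by
      have := hlen j; rw [hjl, List.length_append] at this; omega
    have hy1 : 1 ≤ yl.length := List.length_pos_iff.mpr hyne
    have hx'1 : 1 ≤ x'l.length := List.length_pos_iff.mpr hx'ne
    have hkn : k ≤ n - 1 := by omega
    set t := min k e - 1 with ht
    have htk : t < k := by omega
    have hte : t < e := by omega
    have htk' : t < xl.length := htk
    set a := xl[t] with ha
    -- a < c : it occurs among the first e letters of w i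
    have hac : (a : Fin d).val < c := by
      apply hfirst i
      rw [hil, List.take_append]
      apply List.mem_append_left
      have htke : t < (List.take e xl).length := by
        rw [List.length_take]; omega
      have : a = (List.take e xl)[t] := (List.getElem_take (xs := xl)).symm
      rw [this]
      exact List.getElem_mem _
    -- a ≥ c : it occurs among the letters of w j after position e
    have hca : c ≤ (a : Fin d).val := by
      apply hlast j
      rw [hjl, List.drop_append]
      apply List.mem_append_right
      have hst : e - x'l.length ≤ t := by omega
      have hdl : t - (e - x'l.length) < (List.drop (e - x'l.length) xl).length := by
        rw [List.length_drop]; omega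
      refine List.mem_iff_getElem.mpr ⟨t - (e - x'l.length), hdl, ?_⟩
      rw [List.getElem_drop]
      congr 1
      omega
    omega

end MildStmt
end
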